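/- arXiv:0706.3282 — 5 statements merged into one kernel-verified Lean document; each statement's English description precedes it below -/
import Mathlib

section
/- Let A and H be Lie bialgebras and (A, H, ▷, ◁) a matched pair of Lie algebras. Assume A is a left H-module Lie coalgebra, i.e. δ_A(h ▷ a) = h ▷ a₁ ⊗ a₂ + a₁ ⊗ h ▷ a₂, and H is a right A-module Lie coalgebra, i.e. δ_H(h ◁ a) = h₁ ◁ a ⊗ h₂ + h₁ ⊗ h₂ ◁ a, and that condition (AA1) holds: h₁ ⊗ (h₂ ▷ a) + (h ◁ a₁) ⊗ a₂ = 0 in H ⊗ A for all h ∈ H, a ∈ A. Then the double cross sum A ⋈ H, namely the vector space A ⊕ H with bracket [(a,h),(b,g)] = ([a,b] + h ▷ b − g ▷ a, [h,g] + h ◁ b − g ◁ a) and with the direct sum cobracket δ(a,h) = δ_A(a) + δ_H(h), is a Lie bialgebra. -/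
open TensorProduct

noncomputable section

variable {k : Type*} [Field k]
variable {A H : Type*} [AddCommGroup A] [Module k A] [AddCommGroup H] [Module k H]

/-- The cyclic rotation `ξ : u ⊗ v ⊗ w ↦ v ⊗ w ⊗ u` on `(L ⊗ L) ⊗ L`. -/
def ξmap (k L : Type*) [Field k] [AddCommGroup L] [Module k L] :
    ((L ⊗[k] L) ⊗[k] L) →ₗ[k] ((L ⊗[k] L) ⊗[k] L) :=
  (TensorProduct.comm k L (L ⊗[k] L)).toLinearMap ∘ₗ (TensorProduct.assoc k L L L).toLinearMap

/-- Swap the last two tensor factors: `(m ⊗ n) ⊗ p ↦ (m ⊗ p) ⊗ n`. -/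
def swapR (k M N P : Type*) [Field k] [AddCommGroup M] [Module k M] [AddCommGroup N]
    [Module k N] [AddCommGroup P] [Module k P] :
    ((M ⊗[k] N) ⊗[k] P) →ₗ[k] ((M ⊗[k] P) ⊗[k] N) :=
  (TensorProduct.assoc k M P N).symm.toLinearMap
    ∘ₗ TensorProduct.map LinearMap.id (TensorProduct.comm k N P).toLinearMap
    ∘ₗ (TensorProduct.assoc k M N P).toLinearMap

/-- A bilinear bracket is a Lie algebra structure: antisymmetry and the Jacobi identity. -/
def IsLieAlg {L : Type*} [AddCommGroup L] [Module k L] (br : L →ₗ[k] L →ₗ[k] L) : Prop :=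
  (∀ x y, br x y = - br y x) ∧
  (∀ x y z, br (br x y) z + br (br y z) x + br (br z x) y = 0)

/-- A cobracket is a Lie coalgebra structure: coanticommutativity `τ ∘ δ = −δ` and the
co-Jacobi identity `(id + ξ + ξ²) ∘ (δ ⊗ id) ∘ δ = 0`. -/
def IsLieCoalg {L : Type*} [AddCommGroup L] [Module k L] (δ : L →ₗ[k] L ⊗[k] L) : Prop :=
  (∀ x, TensorProduct.comm k L L (δ x) = - δ x) ∧
  (∀ x, TensorProduct.map δ LinearMap.id (δ x)
      + ξmap k L (TensorProduct.map δ LinearMap.id (δ x))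
      + ξmap k L (ξmap k L (TensorProduct.map δ LinearMap.id (δ x))) = 0)

/-- A Lie bialgebra: simultaneously a Lie algebra and a Lie coalgebra satisfying (LB):
`δ[x,y] = [x,y₁]⊗y₂ + y₁⊗[x,y₂] + x₁⊗[x₂,y] + [x₁,y]⊗x₂` (Sweedler notation). -/
def IsLieBialg {L : Type*} [AddCommGroup L] [Module k L]
    (br : L →ₗ[k] L →ₗ[k] L) (δ : L →ₗ[k] L ⊗[k] L) : Prop :=
  IsLieAlg br ∧ IsLieCoalg δ ∧
  ∀ x y, δ (br x y)
      = TensorProduct.map (br x) LinearMap.id (δ y)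
      + TensorProduct.map LinearMap.id (br x) (δ y)
      + TensorProduct.map LinearMap.id (br.flip y) (δ x)
      + TensorProduct.map (br.flip y) LinearMap.id (δ x)

/-- The bracket on the direct sum `A ⊕ H`:
`[(a,h),(b,g)] = ([a,b] + h▷b − g▷a + σ(h,g), [h,g] + h◁b − g◁a + θ(a,b))`. -/
def bbBracket (brA : A →ₗ[k] A →ₗ[k] A) (brH : H →ₗ[k] H →ₗ[k] H)
    (r : H →ₗ[k] A →ₗ[k] A) (l : H →ₗ[k] A →ₗ[k] H)
    (σ : H →ₗ[k] H →ₗ[k] A) (θ : A →ₗ[k] A →ₗ[k] H) :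
    (A × H) →ₗ[k] (A × H) →ₗ[k] (A × H) :=
  LinearMap.mk₂ k
    (fun x y => (brA x.1 y.1 + r x.2 y.1 - r y.2 x.1 + σ x.2 y.2,
                 brH x.2 y.2 + l x.2 y.1 - l y.2 x.1 + θ x.1 y.1))
    (fun x x' y => by
      simp only [Prod.fst_add, Prod.snd_add, map_add, LinearMap.add_apply, Prod.mk_add_mk,
        Prod.mk.injEq]
      all_goals try (constructor <;> abel))
    (fun c x y => by
      simp only [Prod.smul_fst, Prod.smul_snd, map_smul, LinearMap.smul_apply, Prod.smul_mk,
        Prod.mk.injEq, smul_add, smul_sub]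
      all_goals try (constructor <;> abel))
    (fun x y y' => by
      simp only [Prod.fst_add, Prod.snd_add, map_add, LinearMap.add_apply, Prod.mk_add_mk,
        Prod.mk.injEq]
      all_goals try (constructor <;> abel))
    (fun c x y => by
      simp only [Prod.smul_fst, Prod.smul_snd, map_smul, LinearMap.smul_apply, Prod.smul_mk,
        Prod.mk.injEq, smul_add, smul_sub]
      all_goals try (constructor <;> abel))

/-- The cobracket on the direct sum `A ⊕ H`:
`δ_D(a) = δ_A(a) + φ(a) − τφ(a) + P(a)` and `δ_D(h) = δ_H(h) + ψ(h) − τψ(h) + Q(h)`,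
all terms viewed inside `(A ⊕ H) ⊗ (A ⊕ H)`. -/
def bbCobracket (δA : A →ₗ[k] A ⊗[k] A) (δH : H →ₗ[k] H ⊗[k] H)
    (φ : A →ₗ[k] H ⊗[k] A) (ψ : H →ₗ[k] H ⊗[k] A)
    (P : A →ₗ[k] H ⊗[k] H) (Q : H →ₗ[k] A ⊗[k] A) :
    (A × H) →ₗ[k] (A × H) ⊗[k] (A × H) :=
  (TensorProduct.map (LinearMap.inl k A H) (LinearMap.inl k A H) ∘ₗ δA
    + TensorProduct.map (LinearMap.inr k A H) (LinearMap.inl k A H) ∘ₗ φ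
    - TensorProduct.map (LinearMap.inl k A H) (LinearMap.inr k A H)
        ∘ₗ (TensorProduct.comm k H A).toLinearMap ∘ₗ φ
    + TensorProduct.map (LinearMap.inr k A H) (LinearMap.inr k A H) ∘ₗ P) ∘ₗ LinearMap.fst k A H
  + (TensorProduct.map (LinearMap.inr k A H) (LinearMap.inr k A H) ∘ₗ δH
    + TensorProduct.map (LinearMap.inr k A H) (LinearMap.inl k A H) ∘ₗ ψ
    - TensorProduct.map (LinearMap.inl k A H) (LinearMap.inr k A H)
        ∘ₗ (TensorProduct.comm k H A).toLinearMap ∘ₗ ψ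
    + TensorProduct.map (LinearMap.inl k A H) (LinearMap.inl k A H) ∘ₗ Q) ∘ₗ LinearMap.snd k A H

/-! ### Auxiliary lemmas -/

lemma dcs_comm_map {M N M' N' : Type*} [AddCommGroup M] [Module k M] [AddCommGroup N]
    [Module k N] [AddCommGroup M'] [Module k M'] [AddCommGroup N'] [Module k N']
    (f : M →ₗ[k] M') (g : N →ₗ[k] N') (t : M ⊗[k] N) :
    TensorProduct.comm k M' N' (TensorProduct.map f g t)
      = TensorProduct.map g f (TensorProduct.comm k M N t) := by
  induction t using TensorProduct.induction_on with
  | zero => simp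
  | tmul m n => simp
  | add x y hx hy => simp [hx, hy]

lemma dcs_map_neg_left {M N M' N' : Type*} [AddCommGroup M] [Module k M] [AddCommGroup N]
    [Module k N] [AddCommGroup M'] [Module k M'] [AddCommGroup N'] [Module k N']
    (f : M →ₗ[k] M') (g : N →ₗ[k] N') (t : M ⊗[k] N) :
    TensorProduct.map (-f) g t = - TensorProduct.map f g t := by
  induction t using TensorProduct.induction_on with
  | zero => simp
  | tmul m n => simp [TensorProduct.neg_tmul]
  | add x y hx hy => simp [hx, hy]; abel

lemma dcs_map_neg_right {M N M' N' : Type*} [AddCommGroup M] [Module k M] [AddCommGroup N]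
    [Module k N] [AddCommGroup M'] [Module k M'] [AddCommGroup N'] [Module k N']
    (f : M →ₗ[k] M') (g : N →ₗ[k] N') (t : M ⊗[k] N) :
    TensorProduct.map f (-g) t = - TensorProduct.map f g t := by
  induction t using TensorProduct.induction_on with
  | zero => simp
  | tmul m n => simp [TensorProduct.tmul_neg]
  | add x y hx hy => simp [hx, hy]; abel

lemma dcs_push_left {X Y : Type*} [AddCommGroup X] [Module k X] [AddCommGroup Y] [Module k Y]
    (F : (A × H) →ₗ[k] (A × H)) (j : X →ₗ[k] A × H) (j' : Y →ₗ[k] A × H)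
    (f : X →ₗ[k] A) (f' : X →ₗ[k] H)
    (hF : ∀ c, F (j c) = LinearMap.inl k A H (f c) + LinearMap.inr k A H (f' c))
    (t : X ⊗[k] Y) :
    TensorProduct.map F LinearMap.id (TensorProduct.map j j' t)
      = TensorProduct.map (LinearMap.inl k A H) j' (TensorProduct.map f LinearMap.id t)
      + TensorProduct.map (LinearMap.inr k A H) j' (TensorProduct.map f' LinearMap.id t) := by
  induction t using TensorProduct.induction_on with
  | zero => simp
  | tmul m n =>
    simp [hF, TensorProduct.add_tmul]
    rw [← TensorProduct.add_tmul, Prod.mk_add_mk, add_zero, zero_add]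
  | add x y hx hy => simp only [map_add, hx, hy]; abel

lemma dcs_push_right {X Y : Type*} [AddCommGroup X] [Module k X] [AddCommGroup Y] [Module k Y]
    (F : (A × H) →ₗ[k] (A × H)) (j : X →ₗ[k] A × H) (j' : Y →ₗ[k] A × H)
    (f : Y →ₗ[k] A) (f' : Y →ₗ[k] H)
    (hF : ∀ c, F (j' c) = LinearMap.inl k A H (f c) + LinearMap.inr k A H (f' c))
    (t : X ⊗[k] Y) :
    TensorProduct.map LinearMap.id F (TensorProduct.map j j' t)
      = TensorProduct.map j (LinearMap.inl k A H) (TensorProduct.map LinearMap.id f t)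
      + TensorProduct.map j (LinearMap.inr k A H) (TensorProduct.map LinearMap.id f' t) := by
  induction t using TensorProduct.induction_on with
  | zero => simp
  | tmul m n =>
    simp [hF, TensorProduct.tmul_add]
    rw [← TensorProduct.tmul_add, Prod.mk_add_mk, add_zero, zero_add]
  | add x y hx hy => simp only [map_add, hx, hy]; abel

lemma dcs_xi_nat {L M : Type*} [AddCommGroup L] [Module k L] [AddCommGroup M] [Module k M]
    (e : L →ₗ[k] M) (s : (L ⊗[k] L) ⊗[k] L) :
    ξmap k M (TensorProduct.map (TensorProduct.map e e) e s)
      = TensorProduct.map (TensorProduct.map e e) e (ξmap k L s) := by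
  induction s using TensorProduct.induction_on with
  | zero => simp
  | add x y hx hy => simp [hx, hy]
  | tmul u c =>
    induction u using TensorProduct.induction_on with
    | zero => simp
    | add x y hx hy =>
      simp only [TensorProduct.add_tmul, map_add, hx, hy]
    | tmul a b =>
      simp [ξmap, TensorProduct.assoc_tmul, TensorProduct.comm_tmul]

lemma dcs_map_delta_push {L M : Type*} [AddCommGroup L] [Module k L] [AddCommGroup M]
    [Module k M] (e : L →ₗ[k] M) (δL : L →ₗ[k] L ⊗[k] L) (δM : M →ₗ[k] M ⊗[k] M)
    (hc : ∀ x, δM (e x) = TensorProduct.map e e (δL x)) (t : L ⊗[k] L) :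
    TensorProduct.map δM LinearMap.id (TensorProduct.map e e t)
      = TensorProduct.map (TensorProduct.map e e) e (TensorProduct.map δL LinearMap.id t) := by
  induction t using TensorProduct.induction_on with
  | zero => simp
  | tmul m n => simp [hc]
  | add x y hx hy => simp [hx, hy]

set_option maxHeartbeats 2000000 in
/-- Given Lie bialgebras `A`, `H`, a matched pair of Lie algebras
`(A, H, ▷, ◁)`, with `A` a left `H`-module Lie coalgebra, `H` a right `A`-module Lie
coalgebra, and condition (AA1), the double cross sum `A ⋈ H` is a Lie bialgebra. -/
theorem double_cross_sum_is_lie_bialgebra [CharZero k]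
    (brA : A →ₗ[k] A →ₗ[k] A) (δA : A →ₗ[k] A ⊗[k] A)
    (brH : H →ₗ[k] H →ₗ[k] H) (δH : H →ₗ[k] H ⊗[k] H)
    (r : H →ₗ[k] A →ₗ[k] A) (l : H →ₗ[k] A →ₗ[k] H)
    (hA : IsLieBialg brA δA) (hH : IsLieBialg brH δH)
    -- `A` is a left `H`-module
    (hmodA : ∀ h g a, r (brH h g) a = r h (r g a) - r g (r h a))
    -- `H` is a right `A`-module
    (hmodH : ∀ h a b, l h (brA a b) = l (l h a) b - l (l h b) a)
    -- (BB1) : `h ▷ [a,b] = [h▷a, b] + [a, h▷b] + (h◁a)▷b − (h◁b)▷a`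
    (hBB1 : ∀ h a b, r h (brA a b)
        = brA (r h a) b + brA a (r h b) + r (l h a) b - r (l h b) a)
    -- (BB2) : `[h,g] ◁ a = [h, g◁a] + [h◁a, g] + h◁(g▷a) − g◁(h▷a)`
    (hBB2 : ∀ h g a, l (brH h g) a
        = brH h (l g a) + brH (l h a) g + l h (r g a) - l g (r h a))
    -- `A` is a left `H`-module Lie coalgebra: `δ_A(h▷a) = h▷a₁ ⊗ a₂ + a₁ ⊗ h▷a₂`
    (hcoA : ∀ h a, δA (r h a)
        = TensorProduct.map (r h) LinearMap.id (δA a)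
        + TensorProduct.map LinearMap.id (r h) (δA a))
    -- `H` is a right `A`-module Lie coalgebra: `δ_H(h◁a) = h₁◁a ⊗ h₂ + h₁ ⊗ h₂◁a`
    (hcoH : ∀ h a, δH (l h a)
        = TensorProduct.map (l.flip a) LinearMap.id (δH h)
        + TensorProduct.map LinearMap.id (l.flip a) (δH h))
    -- (AA1) : `h₁ ⊗ (h₂ ▷ a) + (h ◁ a₁) ⊗ a₂ = 0` in `H ⊗ A`
    (hAA1 : ∀ h a, TensorProduct.map LinearMap.id (r.flip a) (δH h)
        + TensorProduct.map (l h) LinearMap.id (δA a) = 0) :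
    IsLieBialg (bbBracket brA brH r l 0 0) (bbCobracket δA δH 0 0 0 0) := by
  obtain ⟨hA1, hA2, hA3⟩ := hA
  obtain ⟨hH1, hH2, hH3⟩ := hH
  set brD := bbBracket brA brH r l (0 : H →ₗ[k] H →ₗ[k] A) (0 : A →ₗ[k] A →ₗ[k] H) with hbrD
  set δD := bbCobracket δA δH (0 : A →ₗ[k] H ⊗[k] A) (0 : H →ₗ[k] H ⊗[k] A)
    (0 : A →ₗ[k] H ⊗[k] H) (0 : H →ₗ[k] A ⊗[k] A) with hδD
  have br_apply : ∀ x y : A × H, brD x y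
      = (brA x.1 y.1 + r x.2 y.1 - r y.2 x.1, brH x.2 y.2 + l x.2 y.1 - l y.2 x.1) := by
    intro x y
    rw [hbrD]
    simp [bbBracket]
  have δ_apply : ∀ x : A × H, δD x
      = TensorProduct.map (LinearMap.inl k A H) (LinearMap.inl k A H) (δA x.1)
      + TensorProduct.map (LinearMap.inr k A H) (LinearMap.inr k A H) (δH x.2) := by
    intro x
    rw [hδD]
    simp [bbCobracket]
  have hAA1' : ∀ (h : H) (a : A),
      TensorProduct.map (r.flip a) LinearMap.id (δH h)
        + TensorProduct.map LinearMap.id (l h) (δA a) = 0 := by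
    intro h a
    have h0 := congrArg (TensorProduct.comm k H A) (hAA1 h a)
    rw [map_zero, map_add, dcs_comm_map, dcs_comm_map, hH2.1 h, hA2.1 a, map_neg, map_neg] at h0
    linear_combination (norm := module) - h0
  refine ⟨⟨?_, ?_⟩, ⟨?_, ?_⟩, ?_⟩
  · -- antisymmetry
    intro x y
    rw [br_apply, br_apply]
    simp only [Prod.neg_mk, Prod.mk.injEq]
    exact ⟨by linear_combination (norm := module) hA1.1 x.1 y.1,
           by linear_combination (norm := module) hH1.1 x.2 y.2⟩
  · -- Jacobi
    intro x y z
    obtain ⟨a, h⟩ := x; obtain ⟨b, g⟩ := y; obtain ⟨c, f⟩ := z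
    simp only [br_apply]
    simp only [map_add, map_sub, LinearMap.add_apply, LinearMap.sub_apply]
    rw [Prod.mk_add_mk, Prod.mk_add_mk, Prod.mk_eq_zero]
    constructor
    · linear_combination (norm := module) hA1.2 a b c + hmodA h g c + hmodA g f a + hmodA f h b
        - hBB1 f a b - hBB1 h b c - hBB1 g c a
        - hA1.1 a (r f b) - hA1.1 b (r h c) - hA1.1 c (r g a)
    · linear_combination (norm := module) hH1.2 h g f + hBB2 h g c + hBB2 g f a + hBB2 f h b
        - hmodH f a b - hmodH h b c - hmodH g c a
        + hH1.1 h (l g c) + hH1.1 g (l f a) + hH1.1 f (l h b)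
  · -- coanticommutativity
    intro x
    rw [δ_apply x, map_add, dcs_comm_map, dcs_comm_map, hA2.1 x.1, hH2.1 x.2, map_neg, map_neg]
    abel
  · -- co-Jacobi
    intro x
    letI : IsCancelAdd (((A × H) ⊗[k] (A × H)) ⊗[k] (A × H)) :=
      AddCancelMonoid.toIsCancelAdd (((A × H) ⊗[k] (A × H)) ⊗[k] (A × H))
    have hLA : ∀ a : A, δD (LinearMap.inl k A H a)
        = TensorProduct.map (LinearMap.inl k A H) (LinearMap.inl k A H) (δA a) := by
      intro a; rw [δ_apply]; simp
    have hLH : ∀ hh : H, δD (LinearMap.inr k A H hh)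
        = TensorProduct.map (LinearMap.inr k A H) (LinearMap.inr k A H) (δH hh) := by
      intro hh; rw [δ_apply]; simp
    have E1 := congrArg (TensorProduct.map
      (TensorProduct.map (LinearMap.inl k A H) (LinearMap.inl k A H)) (LinearMap.inl k A H))
      (hA2.2 x.1)
    have E2 := congrArg (TensorProduct.map
      (TensorProduct.map (LinearMap.inr k A H) (LinearMap.inr k A H)) (LinearMap.inr k A H))
      (hH2.2 x.2)
    simp only [LinearMap.map_add, LinearMap.map_zero] at E1 E2
    rw [δ_apply x]
    simp only [map_add]
    rw [dcs_map_delta_push (LinearMap.inl k A H) δA δD hLA,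
        dcs_map_delta_push (LinearMap.inr k A H) δH δD hLH]
    simp only [map_add, dcs_xi_nat]
    have E := congrArg₂ (· + ·) E1 E2
    simp only [add_zero] at E
    rw [← E]
    abel
  · -- compatibility (LB)
    have case_ll : ∀ a b : A,
        δD (brD (a, 0) (b, 0))
          = TensorProduct.map (brD (a, 0)) LinearMap.id (δD (b, 0))
          + TensorProduct.map LinearMap.id (brD (a, 0)) (δD (b, 0))
          + TensorProduct.map LinearMap.id (brD.flip (b, 0)) (δD (a, 0))
          + TensorProduct.map (brD.flip (b, 0)) LinearMap.id (δD (a, 0)) := by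
      intro a b
      have h1 : ∀ c : A, brD (a, 0) (LinearMap.inl k A H c)
          = LinearMap.inl k A H (brA a c) + LinearMap.inr k A H ((0 : A →ₗ[k] H) c) := by
        intro c; rw [br_apply]; simp
      have h2 : ∀ c : A, brD.flip (b, 0) (LinearMap.inl k A H c)
          = LinearMap.inl k A H (brA.flip b c) + LinearMap.inr k A H ((0 : A →ₗ[k] H) c) := by
        intro c; rw [LinearMap.flip_apply, br_apply]; simp
      have hb : brD (a, (0 : H)) (b, 0) = ((brA a b, 0) : A × H) := by rw [br_apply]; simp
      rw [hb, δ_apply, δ_apply, δ_apply]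
      simp only [map_zero, add_zero]
      rw [hA3 a b]
      rw [dcs_push_left (brD (a, 0)) (LinearMap.inl k A H) (LinearMap.inl k A H)
            (brA a) 0 h1 (δA b),
          dcs_push_right (brD (a, 0)) (LinearMap.inl k A H) (LinearMap.inl k A H)
            (brA a) 0 h1 (δA b),
          dcs_push_right (brD.flip (b, 0)) (LinearMap.inl k A H) (LinearMap.inl k A H)
            (brA.flip b) 0 h2 (δA a),
          dcs_push_left (brD.flip (b, 0)) (LinearMap.inl k A H) (LinearMap.inl k A H)
            (brA.flip b) 0 h2 (δA a)]
      simp only [TensorProduct.map_zero_left, TensorProduct.map_zero_right, map_zero,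
        map_add, add_zero]
      abel
    have case_rr : ∀ h g : H,
        δD (brD (0, h) (0, g))
          = TensorProduct.map (brD (0, h)) LinearMap.id (δD (0, g))
          + TensorProduct.map LinearMap.id (brD (0, h)) (δD (0, g))
          + TensorProduct.map LinearMap.id (brD.flip (0, g)) (δD (0, h))
          + TensorProduct.map (brD.flip (0, g)) LinearMap.id (δD (0, h)) := by
      intro h g
      have h1 : ∀ f : H, brD (0, h) (LinearMap.inr k A H f)
          = LinearMap.inl k A H ((0 : H →ₗ[k] A) f) + LinearMap.inr k A H (brH h f) := by
        intro f; rw [br_apply]; simp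
      have h2 : ∀ f : H, brD.flip (0, g) (LinearMap.inr k A H f)
          = LinearMap.inl k A H ((0 : H →ₗ[k] A) f) + LinearMap.inr k A H (brH.flip g f) := by
        intro f; rw [LinearMap.flip_apply, br_apply]; simp
      have hb : brD ((0 : A), h) ((0 : A), g) = ((0, brH h g) : A × H) := by rw [br_apply]; simp
      rw [hb, δ_apply, δ_apply, δ_apply]
      simp only [map_zero, zero_add]
      rw [hH3 h g]
      rw [dcs_push_left (brD (0, h)) (LinearMap.inr k A H) (LinearMap.inr k A H)
            0 (brH h) h1 (δH g),
          dcs_push_right (brD (0, h)) (LinearMap.inr k A H) (LinearMap.inr k A H)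
            0 (brH h) h1 (δH g),
          dcs_push_right (brD.flip (0, g)) (LinearMap.inr k A H) (LinearMap.inr k A H)
            0 (brH.flip g) h2 (δH h),
          dcs_push_left (brD.flip (0, g)) (LinearMap.inr k A H) (LinearMap.inr k A H)
            0 (brH.flip g) h2 (δH h)]
      simp only [TensorProduct.map_zero_left, TensorProduct.map_zero_right, map_zero,
        map_add, zero_add]
      abel
    have case_rl : ∀ (h : H) (b : A),
        δD (brD (0, h) (b, 0))
          = TensorProduct.map (brD (0, h)) LinearMap.id (δD (b, 0))
          + TensorProduct.map LinearMap.id (brD (0, h)) (δD (b, 0))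
          + TensorProduct.map LinearMap.id (brD.flip (b, 0)) (δD (0, h))
          + TensorProduct.map (brD.flip (b, 0)) LinearMap.id (δD (0, h)) := by
      intro h b
      have h1 : ∀ c : A, brD (0, h) (LinearMap.inl k A H c)
          = LinearMap.inl k A H (r h c) + LinearMap.inr k A H (l h c) := by
        intro c; rw [br_apply]; simp
      have h2 : ∀ f : H, brD.flip (b, 0) (LinearMap.inr k A H f)
          = LinearMap.inl k A H (r.flip b f) + LinearMap.inr k A H (l.flip b f) := by
        intro f; rw [LinearMap.flip_apply, br_apply]; simp
      have hb : brD ((0 : A), h) (b, 0) = ((r h b, l h b) : A × H) := by rw [br_apply]; simp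
      rw [hb, δ_apply, δ_apply, δ_apply]
      simp only [map_zero, add_zero, zero_add]
      rw [hcoA h b, hcoH h b]
      rw [dcs_push_left (brD (0, h)) (LinearMap.inl k A H) (LinearMap.inl k A H)
            (r h) (l h) h1 (δA b),
          dcs_push_right (brD (0, h)) (LinearMap.inl k A H) (LinearMap.inl k A H)
            (r h) (l h) h1 (δA b),
          dcs_push_right (brD.flip (b, 0)) (LinearMap.inr k A H) (LinearMap.inr k A H)
            (r.flip b) (l.flip b) h2 (δH h),
          dcs_push_left (brD.flip (b, 0)) (LinearMap.inr k A H) (LinearMap.inr k A H)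
            (r.flip b) (l.flip b) h2 (δH h)]
      have z1 : TensorProduct.map (LinearMap.inr k A H) (LinearMap.inl k A H)
            (TensorProduct.map LinearMap.id (r.flip b) (δH h))
          + TensorProduct.map (LinearMap.inr k A H) (LinearMap.inl k A H)
            (TensorProduct.map (l h) LinearMap.id (δA b)) = 0 := by
        rw [← map_add, hAA1 h b, map_zero]
      have z2 : TensorProduct.map (LinearMap.inl k A H) (LinearMap.inr k A H)
            (TensorProduct.map (r.flip b) LinearMap.id (δH h))
          + TensorProduct.map (LinearMap.inl k A H) (LinearMap.inr k A H)
            (TensorProduct.map LinearMap.id (l h) (δA b)) = 0 := by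
        rw [← map_add, hAA1' h b, map_zero]
      simp only [map_add]
      linear_combination (norm := module) - z1 - z2
    have case_lr : ∀ (a : A) (g : H),
        δD (brD (a, 0) (0, g))
          = TensorProduct.map (brD (a, 0)) LinearMap.id (δD (0, g))
          + TensorProduct.map LinearMap.id (brD (a, 0)) (δD (0, g))
          + TensorProduct.map LinearMap.id (brD.flip (0, g)) (δD (a, 0))
          + TensorProduct.map (brD.flip (0, g)) LinearMap.id (δD (a, 0)) := by
      intro a g
      have h1 : ∀ f : H, brD (a, 0) (LinearMap.inr k A H f)
          = LinearMap.inl k A H ((-r.flip a) f) + LinearMap.inr k A H ((-l.flip a) f) := by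
        intro f; rw [br_apply]; simp
      have h2 : ∀ c : A, brD.flip (0, g) (LinearMap.inl k A H c)
          = LinearMap.inl k A H ((-(r g)) c) + LinearMap.inr k A H ((-(l g)) c) := by
        intro c; rw [LinearMap.flip_apply, br_apply]; simp
      have hb : brD (a, (0 : H)) ((0 : A), g) = ((-(r g a), -(l g a)) : A × H) := by
        rw [br_apply]; simp
      rw [hb, δ_apply, δ_apply, δ_apply]
      simp only [map_zero, add_zero, zero_add, map_neg]
      rw [hcoA g a, hcoH g a]
      rw [dcs_push_left (brD (a, 0)) (LinearMap.inr k A H) (LinearMap.inr k A H)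
            (-r.flip a) (-l.flip a) h1 (δH g),
          dcs_push_right (brD (a, 0)) (LinearMap.inr k A H) (LinearMap.inr k A H)
            (-r.flip a) (-l.flip a) h1 (δH g),
          dcs_push_right (brD.flip (0, g)) (LinearMap.inl k A H) (LinearMap.inl k A H)
            (-(r g)) (-(l g)) h2 (δA a),
          dcs_push_left (brD.flip (0, g)) (LinearMap.inl k A H) (LinearMap.inl k A H)
            (-(r g)) (-(l g)) h2 (δA a)]
      have z1 : TensorProduct.map (LinearMap.inr k A H) (LinearMap.inl k A H)
            (TensorProduct.map LinearMap.id (r.flip a) (δH g))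
          + TensorProduct.map (LinearMap.inr k A H) (LinearMap.inl k A H)
            (TensorProduct.map (l g) LinearMap.id (δA a)) = 0 := by
        rw [← map_add, hAA1 g a, map_zero]
      have z2 : TensorProduct.map (LinearMap.inl k A H) (LinearMap.inr k A H)
            (TensorProduct.map (r.flip a) LinearMap.id (δH g))
          + TensorProduct.map (LinearMap.inl k A H) (LinearMap.inr k A H)
            (TensorProduct.map LinearMap.id (l g) (δA a)) = 0 := by
        rw [← map_add, hAA1' g a, map_zero]
      simp only [dcs_map_neg_left, dcs_map_neg_right, map_neg, map_add]
      linear_combination (norm := module) z1 + z2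
    intro x y
    obtain ⟨a, h⟩ := x; obtain ⟨b, g⟩ := y
    have hx : ((a, h) : A × H) = (a, 0) + (0, h) := by simp
    have hy : ((b, g) : A × H) = (b, 0) + (0, g) := by simp
    rw [hx, hy]
    simp only [map_add, LinearMap.add_apply, TensorProduct.map_add_left,
      TensorProduct.map_add_right]
    rw [case_ll a b, case_lr a g, case_rl h b, case_rr h g]
    abel

end
end

section
/- Let A and H be Lie bialgebras and ω : H ⊗ A → k a skew-pairing, i.e. ω([h,g], a) = ω(h, a₁)ω(g, a₂) and ω(h, [a,b]) = ω(h₁, b)ω(h₂, a) for all h, g ∈ H, a, b ∈ A. Then the bilinear map ◁ : H × A → H defined by h ◁ a := ω(h₂, a) h₁ makes H a right A-module, i.e. h ◁ [a,b] = (h ◁ a) ◁ b − (h ◁ b) ◁ a for all h ∈ H and a, b ∈ A. -/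
open TensorProduct

noncomputable section

variable {k : Type*} [Field k]
variable {A H : Type*} [AddCommGroup A] [Module k A] [AddCommGroup H] [Module k H]

/-- The right action `h ◁ a := ω(h₂, a) h₁` defined from a pairing `ω` and the cobracket of
`H` (Sweedler notation `δ_H h = h₁ ⊗ h₂`). -/
def pairingLact (δH : H →ₗ[k] H ⊗[k] H) (ω : H →ₗ[k] A →ₗ[k] k) : H →ₗ[k] A →ₗ[k] H :=
  LinearMap.mk₂ k
    (fun h a => TensorProduct.rid k H
      (TensorProduct.map LinearMap.id (ω.flip a) (δH h)))
    (fun h h' a => by simp [map_add])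
    (fun c h a => by simp [map_smul])
    (fun h a a' => by simp [map_add, TensorProduct.map_add_right])
    (fun c h a => by simp [map_smul, TensorProduct.map_smul_right])

/-- The left action `h ▷ a := ω(h, a₂) a₁` defined from a pairing `ω` and the cobracket of
`A` (Sweedler notation `δ_A a = a₁ ⊗ a₂`). -/
def pairingRact (δA : A →ₗ[k] A ⊗[k] A) (ω : H →ₗ[k] A →ₗ[k] k) : H →ₗ[k] A →ₗ[k] A :=
  LinearMap.mk₂ k
    (fun h a => TensorProduct.rid k A
      (TensorProduct.map LinearMap.id (ω h) (δA a)))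
    (fun h h' a => by simp [map_add, TensorProduct.map_add_right])
    (fun c h a => by simp [map_smul, TensorProduct.map_smul_right])
    (fun h a a' => by simp [map_add])
    (fun c h a => by simp [map_smul])

def Fm (ω : H →ₗ[k] A →ₗ[k] k) (a b : A) : ((H ⊗[k] H) ⊗[k] H) →ₗ[k] H :=
  (TensorProduct.rid k H).toLinearMap
    ∘ₗ TensorProduct.map ((TensorProduct.rid k H).toLinearMap
        ∘ₗ TensorProduct.map LinearMap.id (ω.flip b)) (ω.flip a)

def Gm (ω : H →ₗ[k] A →ₗ[k] k) (a b : A) : ((H ⊗[k] H) ⊗[k] H) →ₗ[k] H :=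
  (TensorProduct.rid k H).toLinearMap
    ∘ₗ TensorProduct.map ((TensorProduct.lid k H).toLinearMap
        ∘ₗ TensorProduct.map (ω.flip a) LinearMap.id) (ω.flip b)

def Hm (ω : H →ₗ[k] A →ₗ[k] k) (a b : A) : ((H ⊗[k] H) ⊗[k] H) →ₗ[k] H :=
  (TensorProduct.lid k H).toLinearMap
    ∘ₗ TensorProduct.map (LinearMap.mul' k k
        ∘ₗ TensorProduct.map (ω.flip b) (ω.flip a)) LinearMap.id

lemma Fξ (ω : H →ₗ[k] A →ₗ[k] k) (a b : A) :
    Fm ω a b ∘ₗ ξmap k H = Gm ω a b := by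
  apply TensorProduct.ext_threefold
  intro x y z
  simp [Fm, Gm, ξmap, smul_smul, mul_comm]

lemma Fξξ (ω : H →ₗ[k] A →ₗ[k] k) (a b : A) :
    Fm ω a b ∘ₗ ξmap k H ∘ₗ ξmap k H = Hm ω a b := by
  apply TensorProduct.ext_threefold
  intro x y z
  simp [Fm, Hm, ξmap, smul_smul, mul_comm]

/-- `lid (map f id v) = rid (map id f (comm v))` as linear maps. -/
lemma lid_comm_trick (f : H →ₗ[k] k) :
    (TensorProduct.lid k H).toLinearMap ∘ₗ TensorProduct.map f LinearMap.id
      = (TensorProduct.rid k H).toLinearMap ∘ₗ TensorProduct.map LinearMap.id f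
          ∘ₗ (TensorProduct.comm k H H).toLinearMap := by
  apply TensorProduct.ext'
  intro x y
  simp

theorem skew_pairing_right_module'
    (brA : A →ₗ[k] A →ₗ[k] A)
    (δH : H →ₗ[k] H ⊗[k] H)
    (ω : H →ₗ[k] A →ₗ[k] k)
    (coanti : ∀ x, TensorProduct.comm k H H (δH x) = - δH x)
    (cojac : ∀ x, TensorProduct.map δH LinearMap.id (δH x)
      + ξmap k H (TensorProduct.map δH LinearMap.id (δH x))
      + ξmap k H (ξmap k H (TensorProduct.map δH LinearMap.id (δH x))) = 0)
    (hω2 : ∀ h a b, ω h (brA a b)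
        = LinearMap.mul' k k (TensorProduct.map (ω.flip b) (ω.flip a) (δH h))) :
    ∀ h a b, pairingLact δH ω h (brA a b)
      = pairingLact δH ω (pairingLact δH ω h a) b
      - pairingLact δH ω (pairingLact δH ω h b) a := by
  intro h a b
  -- Three evaluation lemmas on `T := map δH id (δH h)`.
  have lem1 : Fm ω a b (TensorProduct.map δH LinearMap.id (δH h))
      = pairingLact δH ω (pairingLact δH ω h a) b := by
    have key : Fm ω a b ∘ₗ TensorProduct.map δH LinearMap.id
        = ((pairingLact δH ω).flip b) ∘ₗ (TensorProduct.rid k H).toLinearMap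
            ∘ₗ TensorProduct.map LinearMap.id (ω.flip a) := by
      apply TensorProduct.ext'
      intro x y
      simp [Fm, pairingLact]
    have := congrArg (fun f => f (δH h)) key
    simpa [pairingLact] using this
  have lem2 : Gm ω a b (TensorProduct.map δH LinearMap.id (δH h))
      = - pairingLact δH ω (pairingLact δH ω h b) a := by
    have key : Gm ω a b ∘ₗ TensorProduct.map δH LinearMap.id
        = - (((pairingLact δH ω).flip a) ∘ₗ (TensorProduct.rid k H).toLinearMap
            ∘ₗ TensorProduct.map LinearMap.id (ω.flip b)) := by
      apply TensorProduct.ext'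
      intro x y
      have trick := congrArg (fun f => f (δH x)) (lid_comm_trick (ω.flip a))
      simp only [LinearMap.comp_apply, LinearEquiv.coe_coe, coanti x, map_neg] at trick
      simp only [Gm, LinearMap.comp_apply, TensorProduct.map_tmul, LinearMap.id_coe, id_eq,
        LinearEquiv.coe_coe, TensorProduct.rid_tmul, LinearMap.neg_apply, map_smul, trick,
        pairingLact, LinearMap.mk₂_apply, LinearMap.flip_apply]
      simp [smul_neg]
    have := congrArg (fun f => f (δH h)) key
    simpa [pairingLact] using this
  have lem3 : Hm ω a b (TensorProduct.map δH LinearMap.id (δH h))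
      = - pairingLact δH ω h (brA a b) := by
    have key : Hm ω a b ∘ₗ TensorProduct.map δH LinearMap.id
        = (TensorProduct.lid k H).toLinearMap
            ∘ₗ TensorProduct.map (ω.flip (brA a b)) LinearMap.id := by
      apply TensorProduct.ext'
      intro x y
      simp [Hm, hω2 x a b]
    have e1 := congrArg (fun f => f (δH h)) key
    have trick := congrArg (fun f => f (δH h)) (lid_comm_trick (ω.flip (brA a b)))
    simp only [LinearMap.comp_apply, LinearEquiv.coe_coe, coanti h, map_neg] at trick
    simp only [LinearMap.comp_apply, LinearEquiv.coe_coe] at e1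
    rw [e1, trick]
    simp [pairingLact]
  -- combine with co-Jacobi
  have cj := congrArg (Fm ω a b) (cojac h)
  simp only [map_add, map_zero] at cj
  have eG := congrArg (fun f => f (TensorProduct.map δH LinearMap.id (δH h))) (Fξ ω a b)
  have eH := congrArg (fun f => f (TensorProduct.map δH LinearMap.id (δH h))) (Fξξ ω a b)
  simp only [LinearMap.comp_apply] at eG eH
  rw [eG, eH, lem1, lem2, lem3] at cj
  linear_combination (norm := abel) -cj

/-- For a skew-pairing `ω : H ⊗ A → k` between Lie bialgebras,
`h ◁ a := ω(h₂, a) h₁` makes `H` a right `A`-module. -/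
theorem skew_pairing_right_module [CharZero k]
    (brA : A →ₗ[k] A →ₗ[k] A) (δA : A →ₗ[k] A ⊗[k] A)
    (brH : H →ₗ[k] H →ₗ[k] H) (δH : H →ₗ[k] H ⊗[k] H)
    (ω : H →ₗ[k] A →ₗ[k] k)
    (hA : IsLieBialg brA δA) (hH : IsLieBialg brH δH)
    -- `ω` is a skew-pairing:  `ω([h,g], a) = ω(h, a₁) ω(g, a₂)`
    (hω1 : ∀ h g a, ω (brH h g) a
        = LinearMap.mul' k k (TensorProduct.map (ω h) (ω g) (δA a)))
    -- and `ω(h, [a,b]) = ω(h₁, b) ω(h₂, a)`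
    (hω2 : ∀ h a b, ω h (brA a b)
        = LinearMap.mul' k k (TensorProduct.map (ω.flip b) (ω.flip a) (δH h))) :
    ∀ h a b, pairingLact δH ω h (brA a b)
      = pairingLact δH ω (pairingLact δH ω h a) b
      - pairingLact δH ω (pairingLact δH ω h b) a :=
  skew_pairing_right_module' brA δH ω hH.2.1.1 hH.2.1.2 hω2

end
end

section
/- Let A and H be Lie bialgebras and ω : H ⊗ A → k a skew-pairing, i.e. ω([h,g], a) = ω(h, a₁)ω(g, a₂) and ω(h, [a,b]) = ω(h₁, b)ω(h₂, a) for all h, g ∈ H, a, b ∈ A. Then the bilinear map ▷ : H × A → A defined by h ▷ a := ω(h, a₂) a₁ makes A a left H-module, i.e. [h,g] ▷ a = h ▷ (g ▷ a) − g ▷ (h ▷ a) for all h, g ∈ H and a ∈ A. -/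
open TensorProduct

noncomputable section

variable {k : Type*} [Field k]
variable {A H : Type*} [AddCommGroup A] [Module k A] [AddCommGroup H] [Module k H]

/-- Contraction on the right factor: `u ⊗ v ↦ ω(x, v) • u`. -/
def ctR (ω : H →ₗ[k] A →ₗ[k] k) (x : H) : A ⊗[k] A →ₗ[k] A :=
  (TensorProduct.rid k A).toLinearMap ∘ₗ TensorProduct.map LinearMap.id (ω x)

/-- Contraction on the left factor: `u ⊗ v ↦ ω(x, u) • v`. -/
def ctL (ω : H →ₗ[k] A →ₗ[k] k) (x : H) : A ⊗[k] A →ₗ[k] A :=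
  (TensorProduct.lid k A).toLinearMap ∘ₗ TensorProduct.map (ω x) LinearMap.id

lemma ctR_tmul (ω : H →ₗ[k] A →ₗ[k] k) (x : H) (u v : A) :
    ctR ω x (u ⊗ₜ v) = ω x v • u := by simp [ctR]

lemma ctL_tmul (ω : H →ₗ[k] A →ₗ[k] k) (x : H) (u v : A) :
    ctL ω x (u ⊗ₜ v) = ω x u • v := by simp [ctL]

/-- For a skew-pairing `ω : H ⊗ A → k` between Lie bialgebras,
`h ▷ a := ω(h, a₂) a₁` makes `A` a left `H`-module. -/
theorem skew_pairing_left_module [CharZero k]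
    (brA : A →ₗ[k] A →ₗ[k] A) (δA : A →ₗ[k] A ⊗[k] A)
    (brH : H →ₗ[k] H →ₗ[k] H) (δH : H →ₗ[k] H ⊗[k] H)
    (ω : H →ₗ[k] A →ₗ[k] k)
    (hA : IsLieBialg brA δA) (hH : IsLieBialg brH δH)
    -- `ω` is a skew-pairing:  `ω([h,g], a) = ω(h, a₁) ω(g, a₂)`
    (hω1 : ∀ h g a, ω (brH h g) a
        = LinearMap.mul' k k (TensorProduct.map (ω h) (ω g) (δA a)))
    -- and `ω(h, [a,b]) = ω(h₁, b) ω(h₂, a)`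
    (hω2 : ∀ h a b, ω h (brA a b)
        = LinearMap.mul' k k (TensorProduct.map (ω.flip b) (ω.flip a) (δH h))) :
    ∀ h g a, pairingRact δA ω (brH h g) a
      = pairingRact δA ω h (pairingRact δA ω g a)
      - pairingRact δA ω g (pairingRact δA ω h a) := by
  obtain ⟨-, ⟨hanti, hcoj⟩, -⟩ := hA
  intro h g a
  -- `pairingRact` in terms of the right contraction
  have hT : ∀ (x : H) (b : A), pairingRact δA ω x b = ctR ω x (δA b) := fun x b => rfl
  -- coanticommutativity: left contraction of `δA b` is minus the right contraction
  have hflip : ∀ (x : H) (b : A), ctL ω x (δA b) = - ctR ω x (δA b) := by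
    intro x b
    have h1 : ctL ω x = ctR ω x ∘ₗ (TensorProduct.comm k A A).toLinearMap := by
      apply TensorProduct.ext'
      intro u v
      simp [ctR_tmul, ctL_tmul]
    rw [h1, LinearMap.comp_apply, LinearEquiv.coe_coe, hanti b, map_neg]
  -- the main contraction `F : (A ⊗ A) ⊗ A → A`, `(x ⊗ y) ⊗ z ↦ ω(g,z) ω(h,y) • x`
  let F : (A ⊗[k] A) ⊗[k] A →ₗ[k] A :=
    ctR ω g ∘ₗ TensorProduct.map (ctR ω h) LinearMap.id
  let X : (A ⊗[k] A) ⊗[k] A := TensorProduct.map δA LinearMap.id (δA a)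
  -- (i) `F X = h ▷ (g ▷ a)`
  have e1 : F X = pairingRact δA ω h (pairingRact δA ω g a) := by
    have key : F ∘ₗ TensorProduct.map δA LinearMap.id
        = ctR ω h ∘ₗ δA ∘ₗ ctR ω g := by
      apply TensorProduct.ext'
      intro x z
      simp [F, ctR_tmul, map_smul]
    have t := DFunLike.congr_fun key (δA a)
    simp only [LinearMap.comp_apply] at t
    rw [hT, hT]
    exact t
  -- (ii) `F (ξ X) = - g ▷ (h ▷ a)`
  have e2 : F (ξmap k A X) = - pairingRact δA ω g (pairingRact δA ω h a) := by
    have k1 : F ∘ₗ ξmap k A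
        = ctL ω g ∘ₗ ((TensorProduct.rid k (A ⊗[k] A)).toLinearMap
            ∘ₗ TensorProduct.map LinearMap.id (ω h)) := by
      apply TensorProduct.ext_threefold
      intro x y z
      simp [F, ξmap, ctR_tmul, ctL_tmul, smul_smul, mul_comm]
    have k2 : ((TensorProduct.rid k (A ⊗[k] A)).toLinearMap
            ∘ₗ TensorProduct.map LinearMap.id (ω h))
          ∘ₗ TensorProduct.map δA LinearMap.id
        = δA ∘ₗ ctR ω h := by
      apply TensorProduct.ext'
      intro x z
      simp [ctR_tmul, map_smul]
    have t1 := DFunLike.congr_fun k1 X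
    have t2 := DFunLike.congr_fun k2 (δA a)
    simp only [LinearMap.comp_apply] at t1 t2
    rw [t1, t2, hflip, hT, hT]
  -- (iii) `F (ξ (ξ X)) = - [h,g] ▷ a`
  have e3 : F (ξmap k A (ξmap k A X)) = - pairingRact δA ω (brH h g) a := by
    have k1 : (F ∘ₗ ξmap k A) ∘ₗ ξmap k A
        = (TensorProduct.lid k A).toLinearMap
            ∘ₗ TensorProduct.map (LinearMap.mul' k k ∘ₗ TensorProduct.map (ω h) (ω g))
                LinearMap.id := by
      apply TensorProduct.ext_threefold
      intro x y z
      simp [F, ξmap, ctR_tmul, smul_smul, mul_comm]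
    have k2 : ((TensorProduct.lid k A).toLinearMap
            ∘ₗ TensorProduct.map (LinearMap.mul' k k ∘ₗ TensorProduct.map (ω h) (ω g))
                LinearMap.id)
          ∘ₗ TensorProduct.map δA LinearMap.id
        = ctL ω (brH h g) := by
      apply TensorProduct.ext'
      intro x z
      simp [ctL_tmul, ← hω1 h g x]
    have t1 := DFunLike.congr_fun k1 X
    have t2 := DFunLike.congr_fun k2 (δA a)
    simp only [LinearMap.comp_apply] at t1 t2
    rw [t1, t2, hflip, hT]
  -- put everything together using the co-Jacobi identity
  have hsum := congrArg F (hcoj a)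
  rw [map_add, map_add, map_zero] at hsum
  have hX : X = TensorProduct.map δA LinearMap.id (δA a) := rfl
  rw [← hX, e1, e2, e3] at hsum
  linear_combination (norm := abel) -hsum

end
end

section
/- Let A and H be Lie bialgebras and ω : H ⊗ A → k a skew-pairing, i.e. ω([h,g], a) = ω(h, a₁)ω(g, a₂) and ω(h, [a,b]) = ω(h₁, b)ω(h₂, a). Define h ▷ a := ω(h, a₂) a₁ and h ◁ a := ω(h₂, a) h₁. Then (A, H, ▷, ◁) is a matched pair of Lie algebras, the condition (AA1): h₁ ⊗ (h₂ ▷ a) + (h ◁ a₁) ⊗ a₂ = 0 in H ⊗ A holds, A is a left H-module Lie coalgebra (δ_A(h ▷ a) = h ▷ a₁ ⊗ a₂ + a₁ ⊗ h ▷ a₂) and H is a right A-module Lie coalgebra (δ_H(h ◁ a) = h₁ ◁ a ⊗ h₂ + h₁ ⊗ h₂ ◁ a); consequently A ⋈_ω H, the vector space A ⊕ H with bracket [(a,h),(b,g)] = ([a,b] + h ▷ b − g ▷ a, [h,g] + h ◁ b − g ◁ a) and direct sum cobracket δ(a,h) = δ_A(a) + δ_H(h), is a Lie bialgebra. -/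
open TensorProduct

noncomputable section

variable {k : Type*} [Field k]
variable {A H : Type*} [AddCommGroup A] [Module k A] [AddCommGroup H] [Module k H]

section helpers

variable {k : Type*} [Field k]
variable {L : Type*} [AddCommGroup L] [Module k L]

@[simp] lemma zz_xi_tmul (x y z : L) :
    ξmap k L ((x ⊗ₜ[k] y) ⊗ₜ[k] z) = (y ⊗ₜ[k] z) ⊗ₜ[k] x := by simp [ξmap]

@[simp] lemma zz_swapR_tmul {M N P : Type*} [AddCommGroup M] [Module k M] [AddCommGroup N]
    [Module k N] [AddCommGroup P] [Module k P] (x : M) (y : N) (z : P) :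
    swapR k M N P ((x ⊗ₜ[k] y) ⊗ₜ[k] z) = (x ⊗ₜ[k] z) ⊗ₜ[k] y := by simp [swapR]

lemma zz_map_map {M N P Q M' N' : Type*} [AddCommGroup M] [Module k M] [AddCommGroup N]
    [Module k N] [AddCommGroup P] [Module k P] [AddCommGroup Q] [Module k Q]
    [AddCommGroup M'] [Module k M'] [AddCommGroup N'] [Module k N']
    (f : M →ₗ[k] P) (g : N →ₗ[k] Q) (f' : P →ₗ[k] M') (g' : Q →ₗ[k] N')
    (t : M ⊗[k] N) : map f' g' (map f g t) = map (f' ∘ₗ f) (g' ∘ₗ g) t := by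
  rw [map_comp]; rfl

lemma zz_map_neg_left {M N P Q : Type*} [AddCommGroup M] [Module k M] [AddCommGroup N]
    [Module k N] [AddCommGroup P] [Module k P] [AddCommGroup Q] [Module k Q]
    (f : M →ₗ[k] P) (g : N →ₗ[k] Q) (t : M ⊗[k] N) :
    map (-f) g t = - map f g t := by
  induction t with
  | zero => simp
  | tmul x y => simp [neg_tmul]
  | add u v hu hv => simp [hu, hv]; abel

lemma zz_comm_map {M N P Q : Type*} [AddCommGroup M] [Module k M] [AddCommGroup N]
    [Module k N] [AddCommGroup P] [Module k P] [AddCommGroup Q] [Module k Q]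
    (f : M →ₗ[k] P) (g : N →ₗ[k] Q) (t : M ⊗[k] N) :
    TensorProduct.comm k P Q (map f g t) = map g f (TensorProduct.comm k M N t) := by
  induction t with
  | zero => simp
  | tmul x y => simp
  | add u v hu hv => simp [hu, hv]

lemma zz_map_neg_right {M N P Q : Type*} [AddCommGroup M] [Module k M] [AddCommGroup N]
    [Module k N] [AddCommGroup P] [Module k P] [AddCommGroup Q] [Module k Q]
    (f : M →ₗ[k] P) (g : N →ₗ[k] Q) (t : M ⊗[k] N) :
    map f (-g) t = - map f g t := by
  induction t with
  | zero => simp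
  | tmul x y => simp [TensorProduct.tmul_neg]
  | add u v hu hv => simp [hu, hv]; abel

lemma zz_rid_map_l {M N P : Type*} [AddCommGroup M] [Module k M] [AddCommGroup N]
    [Module k N] [AddCommGroup P] [Module k P] (φ : N →ₗ[k] k) (f : M →ₗ[k] P) (t : M ⊗[k] N) :
    TensorProduct.rid k P (map LinearMap.id φ (map f LinearMap.id t))
      = f (TensorProduct.rid k M (map LinearMap.id φ t)) := by
  induction t with
  | zero => simp
  | tmul x y => simp
  | add u v hu hv => simp [hu, hv]

lemma zz_rid_map_r {M N N' : Type*} [AddCommGroup M] [Module k M] [AddCommGroup N]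
    [Module k N] [AddCommGroup N'] [Module k N'] (φ : N →ₗ[k] k) (g : N' →ₗ[k] N)
    (t : M ⊗[k] N') :
    TensorProduct.rid k M (map LinearMap.id φ (map LinearMap.id g t))
      = TensorProduct.rid k M (map LinearMap.id (φ ∘ₗ g) t) := by
  induction t with
  | zero => simp
  | tmul x y => simp
  | add u v hu hv => simp [hu, hv]

lemma zz_mul_comm' {M N : Type*} [AddCommGroup M] [Module k M] [AddCommGroup N]
    [Module k N] (φ : M →ₗ[k] k) (ψ : N →ₗ[k] k) (t : M ⊗[k] N) :
    LinearMap.mul' k k (map ψ φ (TensorProduct.comm k M N t))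
      = LinearMap.mul' k k (map φ ψ t) := by
  induction t with
  | zero => simp
  | tmul x y => simp [mul_comm]
  | add u v hu hv => simp [hu, hv]


variable (δ : L →ₗ[k] L ⊗[k] L)
  (hc : ∀ x, TensorProduct.comm k L L (δ x) = - δ x)

section
include hc

omit hc in

omit hc in
lemma zz_assoc_symm_swap (s : L ⊗[k] L) (y : L) :
    (TensorProduct.assoc k L L L).symm (y ⊗ₜ[k] s) = ξmap k L (ξmap k L (s ⊗ₜ[k] y)) := by
  induction s with
  | zero => simp
  | tmul u v => simp [TensorProduct.assoc_symm_tmul]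
  | add u v hu hv => simp [TensorProduct.tmul_add, TensorProduct.add_tmul, hu, hv]

lemma zz_Sder (x : L) :
    (TensorProduct.assoc k L L L).symm (map LinearMap.id δ (δ x))
      = - ξmap k L (ξmap k L (map δ LinearMap.id (δ x))) := by
  have h1 : ∀ t : L ⊗[k] L,
      (TensorProduct.assoc k L L L).symm (map LinearMap.id δ (TensorProduct.comm k L L t))
        = ξmap k L (ξmap k L (map δ LinearMap.id t)) := by
    intro t
    induction t with
    | zero => simp
    | tmul x y => simpa using zz_assoc_symm_swap (δ x) y
    | add u v hu hv => simp [hu, hv]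
  have h2 : TensorProduct.comm k L L (-(δ x)) = δ x := by rw [map_neg, hc]; abel
  calc (TensorProduct.assoc k L L L).symm (map LinearMap.id δ (δ x))
      = (TensorProduct.assoc k L L L).symm
        (map LinearMap.id δ (TensorProduct.comm k L L (-(δ x)))) := by rw [h2]
    _ = ξmap k L (ξmap k L (map δ LinearMap.id (-(δ x)))) := h1 _
    _ = - ξmap k L (ξmap k L (map δ LinearMap.id (δ x))) := by simp

lemma zz_xiT (x : L) :
    ξmap k L (map δ LinearMap.id (δ x)) = - swapR k L L L (map δ LinearMap.id (δ x)) := by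
  have h1 : ∀ t : (L ⊗[k] L) ⊗[k] L,
      ξmap k L t = swapR k L L L (map (TensorProduct.comm k L L).toLinearMap LinearMap.id t) := by
    intro t
    induction t with
    | zero => simp
    | tmul u z =>
      induction u with
      | zero => simp [TensorProduct.zero_tmul]
      | tmul x y => simp
      | add u v hu hv => simp [TensorProduct.add_tmul, hu, hv]
    | add u v hu hv => simp [hu, hv]
  have hcd : (TensorProduct.comm k L L).toLinearMap ∘ₗ δ = - δ := by
    ext y; simpa using hc y
  have h2 : map (TensorProduct.comm k L L).toLinearMap LinearMap.id (map δ LinearMap.id (δ x))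
      = - map δ LinearMap.id (δ x) := by
    rw [zz_map_map, hcd, LinearMap.id_comp, zz_map_neg_left]
  rw [h1, h2, map_neg]

end

section GEN
variable (hj : ∀ x, map δ LinearMap.id (δ x)
      + ξmap k L (map δ LinearMap.id (δ x))
      + ξmap k L (ξmap k L (map δ LinearMap.id (δ x))) = 0)

include hc hj in
lemma zz_GEN1 (φ₁ φ₂ Φ : L →ₗ[k] k)
    (hΦ : ∀ y, Φ y = LinearMap.mul' k k (map φ₁ φ₂ (δ y))) (x : L) :
    TensorProduct.rid k L (map LinearMap.id Φ (δ x))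
      = TensorProduct.rid k L (map LinearMap.id φ₁
          (δ (TensorProduct.rid k L (map LinearMap.id φ₂ (δ x)))))
        - TensorProduct.rid k L (map LinearMap.id φ₂
          (δ (TensorProduct.rid k L (map LinearMap.id φ₁ (δ x))))) := by
  set G : (L ⊗[k] L) ⊗[k] L →ₗ[k] L :=
    (TensorProduct.rid k L).toLinearMap
      ∘ₗ map ((TensorProduct.rid k L).toLinearMap ∘ₗ map LinearMap.id φ₁) φ₂ with hG
  have Gtmul : ∀ (u v y : L), G ((u ⊗ₜ[k] v) ⊗ₜ[k] y) = φ₂ y • φ₁ v • u := by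
    intro u v y; simp [hG, smul_smul, mul_comm]
  have Gs : ∀ (s : L ⊗[k] L) (y : L),
      G (s ⊗ₜ[k] y) = φ₂ y • TensorProduct.rid k L (map LinearMap.id φ₁ s) := by
    intro s y
    induction s with
    | zero => simp [TensorProduct.zero_tmul]
    | tmul u v => simp [Gtmul]
    | add u v hu hv => simp [TensorProduct.add_tmul, hu, hv]
  have Gsw : ∀ (s : L ⊗[k] L) (y : L),
      G (swapR k L L L (s ⊗ₜ[k] y)) = φ₁ y • TensorProduct.rid k L (map LinearMap.id φ₂ s) := by
    intro s y
    induction s with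
    | zero => simp [TensorProduct.zero_tmul]
    | tmul u v => simp [Gtmul, smul_smul, mul_comm]
    | add u v hu hv => simp [TensorProduct.add_tmul, hu, hv]
  have ha : ∀ t : L ⊗[k] L, TensorProduct.rid k L (map LinearMap.id Φ t)
      = G ((TensorProduct.assoc k L L L).symm (map LinearMap.id δ t)) := by
    have sub : ∀ (s : L ⊗[k] L) (x : L),
        G ((TensorProduct.assoc k L L L).symm (x ⊗ₜ[k] s))
          = (LinearMap.mul' k k (map φ₁ φ₂ s)) • x := by
      intro s x
      induction s with
      | zero => simp [TensorProduct.tmul_zero]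
      | tmul u v => simp [TensorProduct.assoc_symm_tmul, Gtmul, smul_smul, mul_comm]
      | add u v hu hv => simp [TensorProduct.tmul_add, hu, hv, add_smul]
    intro t
    induction t with
    | zero => simp
    | tmul x y => simp [hΦ y, sub (δ y) x]
    | add u v hu hv => simp [hu, hv]
  have hb : ∀ t : L ⊗[k] L,
      TensorProduct.rid k L (map LinearMap.id φ₁
        (δ (TensorProduct.rid k L (map LinearMap.id φ₂ t))))
      = G (map δ LinearMap.id t) := by
    intro t
    induction t with
    | zero => simp
    | tmul x y => simp [Gs]
    | add u v hu hv => simp [hu, hv]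
  have hcc : ∀ t : L ⊗[k] L,
      TensorProduct.rid k L (map LinearMap.id φ₂
        (δ (TensorProduct.rid k L (map LinearMap.id φ₁ t))))
      = G (swapR k L L L (map δ LinearMap.id t)) := by
    intro t
    induction t with
    | zero => simp
    | tmul x y => simp [Gsw]
    | add u v hu hv => simp [hu, hv]
  rw [ha (δ x), hb (δ x), hcc (δ x), zz_Sder δ hc x]
  have e1 : ξmap k L (ξmap k L (map δ LinearMap.id (δ x)))
      = -(map δ LinearMap.id (δ x) + ξmap k L (map δ LinearMap.id (δ x))) :=
    eq_neg_of_add_eq_zero_right (hj x)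
  rw [e1, zz_xiT δ hc x]
  simp only [map_add, map_neg, neg_neg, neg_add_rev]
  abel

include hc hj in
lemma zz_GEN2 (φ : L →ₗ[k] k) (ρ : L →ₗ[k] L)
    (hρ : ∀ y, ρ y = TensorProduct.rid k L (map LinearMap.id φ (δ y))) (x : L) :
    δ (ρ x) = map ρ LinearMap.id (δ x) + map LinearMap.id ρ (δ x) := by
  set G₁ : (L ⊗[k] L) ⊗[k] L →ₗ[k] L ⊗[k] L :=
    (TensorProduct.rid k (L ⊗[k] L)).toLinearMap ∘ₗ map LinearMap.id φ with hG1
  set G₂ : (L ⊗[k] L) ⊗[k] L →ₗ[k] L ⊗[k] L :=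
    map ((TensorProduct.rid k L).toLinearMap ∘ₗ map LinearMap.id φ) LinearMap.id with hG2
  have G1tmul : ∀ (s : L ⊗[k] L) (y : L), G₁ (s ⊗ₜ[k] y) = φ y • s := by
    intro s y; simp [hG1]
  have ha : ∀ t : L ⊗[k] L,
      δ (TensorProduct.rid k L (map LinearMap.id φ t)) = G₁ (map δ LinearMap.id t) := by
    intro t
    induction t with
    | zero => simp
    | tmul x y => simp [G1tmul]
    | add u v hu hv => simp [hu, hv]
  have hb : ∀ t : L ⊗[k] L, map ρ LinearMap.id t = G₂ (map δ LinearMap.id t) := by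
    intro t
    induction t with
    | zero => simp
    | tmul x y => simp [hG2, hρ]
    | add u v hu hv => simp [hu, hv]
  have hcc : ∀ t : L ⊗[k] L,
      map LinearMap.id ρ t = G₁ ((TensorProduct.assoc k L L L).symm (map LinearMap.id δ t)) := by
    have sub : ∀ (s : L ⊗[k] L) (x : L),
        G₁ ((TensorProduct.assoc k L L L).symm (x ⊗ₜ[k] s))
          = x ⊗ₜ[k] TensorProduct.rid k L (map LinearMap.id φ s) := by
      intro s x
      induction s with
      | zero => simp [TensorProduct.tmul_zero]
      | tmul u v => simp [TensorProduct.assoc_symm_tmul, G1tmul, TensorProduct.tmul_smul]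
      | add u v hu hv =>
        simp [TensorProduct.tmul_add, hu, hv]
    intro t
    induction t with
    | zero => simp
    | tmul x y => simp [sub (δ y) x, hρ]
    | add u v hu hv => simp [hu, hv]
  have hd : ∀ u : (L ⊗[k] L) ⊗[k] L, G₁ (swapR k L L L u) = G₂ u := by
    intro u
    induction u with
    | zero => simp
    | tmul s y =>
      induction s with
      | zero => simp [TensorProduct.zero_tmul]
      | tmul a b => simp [G1tmul, hG2, TensorProduct.smul_tmul']
      | add u' v' hu hv => simp [TensorProduct.add_tmul, hu, hv]
    | add u v hu hv => simp [hu, hv]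
  rw [hρ x, ha (δ x), hb (δ x), hcc (δ x), zz_Sder δ hc x]
  have e1 : ξmap k L (ξmap k L (map δ LinearMap.id (δ x)))
      = -(map δ LinearMap.id (δ x) + ξmap k L (map δ LinearMap.id (δ x))) :=
    eq_neg_of_add_eq_zero_right (hj x)
  rw [e1, zz_xiT δ hc x, ← hd]
  simp only [map_add, map_neg, neg_neg, neg_add_rev]
  abel

end GEN
end helpers

section pairing
variable (brA : A →ₗ[k] A →ₗ[k] A) (δA : A →ₗ[k] A ⊗[k] A)
variable (brH : H →ₗ[k] H →ₗ[k] H) (δH : H →ₗ[k] H ⊗[k] H)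
variable (ω : H →ₗ[k] A →ₗ[k] k)

lemma zz_rP (h : H) (a : A) : pairingRact δA ω h a
    = TensorProduct.rid k A (map LinearMap.id (ω h) (δA a)) := rfl

lemma zz_lP (h : H) (a : A) : pairingLact δH ω h a
    = TensorProduct.rid k H (map LinearMap.id (ω.flip a) (δH h)) := rfl

lemma zz_key1 (a : A) (x : A) (u : H ⊗[k] H) :
    ω (TensorProduct.rid k H (map LinearMap.id (ω.flip a) u)) x
      = LinearMap.mul' k k (map (ω.flip x) (ω.flip a) u) := by
  induction u with
  | zero => simp
  | tmul p q => simp [mul_comm]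
  | add u v hu hv => simp [hu, hv]

lemma zz_key2 (g : H) (x : H) (t : A ⊗[k] A) :
    ω x (TensorProduct.rid k A (map LinearMap.id (ω g) t))
      = LinearMap.mul' k k (map (ω x) (ω g) t) := by
  induction t with
  | zero => simp
  | tmul p q => simp [mul_comm]
  | add u v hu hv => simp [hu, hv]

variable (hω1 : ∀ h g a, ω (brH h g) a = LinearMap.mul' k k (map (ω h) (ω g) (δA a)))
variable (hω2 : ∀ h a b, ω h (brA a b)
    = LinearMap.mul' k k (map (ω.flip b) (ω.flip a) (δH h)))
variable (hcA : ∀ x, TensorProduct.comm k A A (δA x) = - δA x)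
variable (hcH : ∀ x, TensorProduct.comm k H H (δH x) = - δH x)

include hω2 in
lemma zz_P1 (h : H) (a x : A) : ω h (brA a x) = ω (pairingLact δH ω h a) x := by
  rw [hω2 h a x]; exact (zz_key1 ω a x (δH h)).symm

include hω2 hcH in
lemma zz_P2 (h : H) (b x : A) : ω h (brA x b) = - ω (pairingLact δH ω h b) x := by
  calc ω h (brA x b) = LinearMap.mul' k k (map (ω.flip b) (ω.flip x) (δH h)) := hω2 h x b
    _ = LinearMap.mul' k k (map (ω.flip x) (ω.flip b) (TensorProduct.comm k H H (δH h))) :=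
        (zz_mul_comm' (ω.flip b) (ω.flip x) (δH h)).symm
    _ = - LinearMap.mul' k k (map (ω.flip x) (ω.flip b) (δH h)) := by rw [hcH h]; simp
    _ = - ω (pairingLact δH ω h b) x := by rw [← zz_key1 ω b x (δH h)]; rfl

include hω1 in
lemma zz_P3 (g : H) (a : A) (x : H) : ω x (pairingRact δA ω g a) = ω (brH x g) a := by
  rw [hω1 x g a]; exact zz_key2 ω g x (δA a)

include hω1 hcA in
lemma zz_P4 (h : H) (a : A) (x : H) : ω x (pairingRact δA ω h a) = - ω (brH h x) a := by
  calc ω x (pairingRact δA ω h a) = LinearMap.mul' k k (map (ω x) (ω h) (δA a)) :=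
        zz_key2 ω h x (δA a)
    _ = LinearMap.mul' k k (map (ω h) (ω x) (TensorProduct.comm k A A (δA a))) :=
        (zz_mul_comm' (ω x) (ω h) (δA a)).symm
    _ = - LinearMap.mul' k k (map (ω h) (ω x) (δA a)) := by rw [hcA a]; simp
    _ = - ω (brH h x) a := by rw [hω1 h x a]

include hω2 hcH in
lemma zz_BB1 (hLB : ∀ a b, δA (brA a b)
      = map (brA a) LinearMap.id (δA b) + map LinearMap.id (brA a) (δA b)
        + map LinearMap.id (brA.flip b) (δA a) + map (brA.flip b) LinearMap.id (δA a))
    (h : H) (a b : A) :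
    pairingRact δA ω h (brA a b)
      = brA (pairingRact δA ω h a) b + brA a (pairingRact δA ω h b)
        + pairingRact δA ω (pairingLact δH ω h a) b
        - pairingRact δA ω (pairingLact δH ω h b) a := by
  have e1 : (ω h) ∘ₗ (brA a) = ω (pairingLact δH ω h a) :=
    LinearMap.ext (fun x => zz_P1 brA δH ω hω2 h a x)
  have e2 : (ω h) ∘ₗ (brA.flip b) = -(ω (pairingLact δH ω h b)) :=
    LinearMap.ext (fun x => by
      simpa using zz_P2 brA δH ω hω2 hcH h b x)
  have t1 : TensorProduct.rid k A (map LinearMap.id (ω h) (map (brA a) LinearMap.id (δA b)))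
      = brA a (pairingRact δA ω h b) := by rw [zz_rid_map_l]; rfl
  have t2 : TensorProduct.rid k A (map LinearMap.id (ω h) (map LinearMap.id (brA a) (δA b)))
      = pairingRact δA ω (pairingLact δH ω h a) b := by rw [zz_rid_map_r, e1]; rfl
  have t3 : TensorProduct.rid k A (map LinearMap.id (ω h) (map LinearMap.id (brA.flip b) (δA a)))
      = - pairingRact δA ω (pairingLact δH ω h b) a := by
    rw [zz_rid_map_r, e2, zz_map_neg_right, map_neg]; rfl
  have t4 : TensorProduct.rid k A (map LinearMap.id (ω h) (map (brA.flip b) LinearMap.id (δA a)))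
      = brA (pairingRact δA ω h a) b := by rw [zz_rid_map_l]; rfl
  calc pairingRact δA ω h (brA a b)
      = TensorProduct.rid k A (map LinearMap.id (ω h) (δA (brA a b))) := rfl
    _ = _ := by rw [hLB a b]; simp only [map_add]; rw [t1, t2, t3, t4]; abel

include hω1 hcA in
lemma zz_BB2 (hLB : ∀ h g, δH (brH h g)
      = map (brH h) LinearMap.id (δH g) + map LinearMap.id (brH h) (δH g)
        + map LinearMap.id (brH.flip g) (δH h) + map (brH.flip g) LinearMap.id (δH h))
    (h g : H) (a : A) :
    pairingLact δH ω (brH h g) a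
      = brH h (pairingLact δH ω g a) + brH (pairingLact δH ω h a) g
        + pairingLact δH ω h (pairingRact δA ω g a)
        - pairingLact δH ω g (pairingRact δA ω h a) := by
  have e1 : (ω.flip a) ∘ₗ (brH h) = -(ω.flip (pairingRact δA ω h a)) :=
    LinearMap.ext (fun x => by
      have hx := zz_P4 δA brH ω hω1 hcA h a x
      simp only [LinearMap.comp_apply, LinearMap.neg_apply, LinearMap.flip_apply]
      rw [hx, neg_neg])
  have e2 : (ω.flip a) ∘ₗ (brH.flip g) = ω.flip (pairingRact δA ω g a) :=
    LinearMap.ext (fun x => by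
      have hx := zz_P3 δA brH ω hω1 g a x
      simp only [LinearMap.comp_apply, LinearMap.flip_apply]
      rw [hx])
  have t1 : TensorProduct.rid k H (map LinearMap.id (ω.flip a) (map (brH h) LinearMap.id (δH g)))
      = brH h (pairingLact δH ω g a) := by rw [zz_rid_map_l]; rfl
  have t2 : TensorProduct.rid k H (map LinearMap.id (ω.flip a) (map LinearMap.id (brH h) (δH g)))
      = - pairingLact δH ω g (pairingRact δA ω h a) := by
    rw [zz_rid_map_r, e1, zz_map_neg_right, map_neg]; rfl
  have t3 : TensorProduct.rid k H
        (map LinearMap.id (ω.flip a) (map LinearMap.id (brH.flip g) (δH h)))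
      = pairingLact δH ω h (pairingRact δA ω g a) := by rw [zz_rid_map_r, e2]; rfl
  have t4 : TensorProduct.rid k H
        (map LinearMap.id (ω.flip a) (map (brH.flip g) LinearMap.id (δH h)))
      = brH (pairingLact δH ω h a) g := by rw [zz_rid_map_l]; rfl
  calc pairingLact δH ω (brH h g) a
      = TensorProduct.rid k H (map LinearMap.id (ω.flip a) (δH (brH h g))) := rfl
    _ = _ := by rw [hLB h g]; simp only [map_add]; rw [t1, t2, t3, t4]; abel

include hω1 hcA in
lemma zz_M1 (hjA : ∀ x, map δA LinearMap.id (δA x)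
      + ξmap k A (map δA LinearMap.id (δA x))
      + ξmap k A (ξmap k A (map δA LinearMap.id (δA x))) = 0)
    (h g : H) (a : A) :
    pairingRact δA ω (brH h g) a
      = pairingRact δA ω h (pairingRact δA ω g a)
        - pairingRact δA ω g (pairingRact δA ω h a) := by
  exact zz_GEN1 δA hcA hjA (ω h) (ω g) (ω (brH h g)) (hω1 h g) a

include hω2 hcH in
lemma zz_M2 (hjH : ∀ x, map δH LinearMap.id (δH x)
      + ξmap k H (map δH LinearMap.id (δH x))
      + ξmap k H (ξmap k H (map δH LinearMap.id (δH x))) = 0)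
    (h : H) (a b : A) :
    pairingLact δH ω h (brA a b)
      = pairingLact δH ω (pairingLact δH ω h a) b
        - pairingLact δH ω (pairingLact δH ω h b) a := by
  exact zz_GEN1 δH hcH hjH (ω.flip b) (ω.flip a) (ω.flip (brA a b))
    (fun y => hω2 y a b) h

include hcA in
lemma zz_MCA (hjA : ∀ x, map δA LinearMap.id (δA x)
      + ξmap k A (map δA LinearMap.id (δA x))
      + ξmap k A (ξmap k A (map δA LinearMap.id (δA x))) = 0)
    (h : H) (a : A) :
    δA (pairingRact δA ω h a)
      = map (pairingRact δA ω h) LinearMap.id (δA a)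
        + map LinearMap.id (pairingRact δA ω h) (δA a) :=
  zz_GEN2 δA hcA hjA (ω h) (pairingRact δA ω h) (fun _ => rfl) a

include hcH in
lemma zz_MCH (hjH : ∀ x, map δH LinearMap.id (δH x)
      + ξmap k H (map δH LinearMap.id (δH x))
      + ξmap k H (ξmap k H (map δH LinearMap.id (δH x))) = 0)
    (h : H) (a : A) :
    δH (pairingLact δH ω h a)
      = map ((pairingLact δH ω).flip a) LinearMap.id (δH h)
        + map LinearMap.id ((pairingLact δH ω).flip a) (δH h) :=
  zz_GEN2 δH hcH hjH (ω.flip a) ((pairingLact δH ω).flip a) (fun _ => rfl) h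

include hcA in
lemma zz_AA1 (h : H) (a : A) :
    map LinearMap.id ((pairingRact δA ω).flip a) (δH h)
      + map (pairingLact δH ω h) LinearMap.id (δA a) = 0 := by
  set Ψ : (H ⊗[k] H) ⊗[k] (A ⊗[k] A) →ₗ[k] H ⊗[k] A :=
    (TensorProduct.rid k (H ⊗[k] A)).toLinearMap
      ∘ₗ map LinearMap.id (TensorProduct.lift ω)
      ∘ₗ (TensorProduct.assoc k (H ⊗[k] A) H A).toLinearMap
      ∘ₗ map (swapR k H H A) LinearMap.id
      ∘ₗ (TensorProduct.assoc k (H ⊗[k] H) A A).symm.toLinearMap with hΨ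
  have Ψtmul : ∀ (p q : H) (x y : A),
      Ψ ((p ⊗ₜ[k] q) ⊗ₜ[k] (x ⊗ₜ[k] y)) = ω q y • (p ⊗ₜ[k] x) := by
    intro p q x y
    simp [hΨ, TensorProduct.assoc_symm_tmul, TensorProduct.assoc_tmul]
  have sub1 : ∀ (t : A ⊗[k] A) (p q : H),
      Ψ ((p ⊗ₜ[k] q) ⊗ₜ[k] t)
        = p ⊗ₜ[k] TensorProduct.rid k A (map LinearMap.id (ω q) t) := by
    intro t p q
    induction t with
    | zero => simp
    | tmul x y => simp [Ψtmul, TensorProduct.tmul_smul]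
    | add u v hu hv => simp [TensorProduct.tmul_add, hu, hv]
  have e1 : ∀ u : H ⊗[k] H,
      map LinearMap.id ((pairingRact δA ω).flip a) u = Ψ (u ⊗ₜ[k] δA a) := by
    intro u
    induction u with
    | zero => simp [TensorProduct.zero_tmul]
    | tmul p q => rw [sub1]; rfl
    | add u v hu hv => simp [TensorProduct.add_tmul, hu, hv]
  have sub2 : ∀ (u : H ⊗[k] H) (x y : A),
      Ψ (u ⊗ₜ[k] (y ⊗ₜ[k] x))
        = (TensorProduct.rid k H (map LinearMap.id (ω.flip x) u)) ⊗ₜ[k] y := by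
    intro u x y
    induction u with
    | zero => simp [TensorProduct.zero_tmul]
    | tmul p q => simp [Ψtmul, TensorProduct.smul_tmul']
    | add u v hu hv => simp [TensorProduct.add_tmul, hu, hv]
  have e2 : ∀ t : A ⊗[k] A,
      map (pairingLact δH ω h) LinearMap.id t
        = Ψ (δH h ⊗ₜ[k] TensorProduct.comm k A A t) := by
    intro t
    induction t with
    | zero => simp
    | tmul x y => rw [TensorProduct.comm_tmul, sub2]; rfl
    | add u v hu hv => simp [TensorProduct.tmul_add, hu, hv]
  rw [e1 (δH h), e2 (δA a), hcA a, TensorProduct.tmul_neg, map_neg]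
  abel

include hcA hcH in
lemma zz_AA1' (h : H) (b : A) :
    map ((pairingRact δA ω).flip b) LinearMap.id (δH h)
      + map LinearMap.id (pairingLact δH ω h) (δA b) = 0 := by
  have h0 := congrArg (TensorProduct.comm k H A) (zz_AA1 δA δH ω hcA h b)
  rw [map_add, zz_comm_map, zz_comm_map, hcH h, hcA b, map_neg, map_neg, map_zero] at h0
  rw [← neg_add] at h0
  have := neg_eq_zero.mp h0
  linear_combination (norm := abel) this

end pairing


section double
variable (brA : A →ₗ[k] A →ₗ[k] A) (brH : H →ₗ[k] H →ₗ[k] H)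
variable (rr : H →ₗ[k] A →ₗ[k] A) (ll : H →ₗ[k] A →ₗ[k] H)
variable (δA : A →ₗ[k] A ⊗[k] A) (δH : H →ₗ[k] H ⊗[k] H)

lemma zz_bb_apply (a b : A) (h g : H) :
    bbBracket brA brH rr ll 0 0 (a, h) (b, g)
      = (brA a b + rr h b - rr g a, brH h g + ll h b - ll g a) := by
  simp [bbBracket]

lemma zz_cb_apply (a : A) (h : H) :
    bbCobracket δA δH 0 0 0 0 (a, h)
      = map (LinearMap.inl k A H) (LinearMap.inl k A H) (δA a)
        + map (LinearMap.inr k A H) (LinearMap.inr k A H) (δH h) := by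
  simp [bbCobracket]

lemma zz_double_alg
    (hAa : ∀ x y, brA x y = - brA y x)
    (hAj : ∀ x y z, brA (brA x y) z + brA (brA y z) x + brA (brA z x) y = 0)
    (hHa : ∀ x y, brH x y = - brH y x)
    (hHj : ∀ x y z, brH (brH x y) z + brH (brH y z) x + brH (brH z x) y = 0)
    (hM1 : ∀ h g a, rr (brH h g) a = rr h (rr g a) - rr g (rr h a))
    (hM2 : ∀ h a b, ll h (brA a b) = ll (ll h a) b - ll (ll h b) a)
    (hBB1 : ∀ h a b, rr h (brA a b)
        = brA (rr h a) b + brA a (rr h b) + rr (ll h a) b - rr (ll h b) a)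
    (hBB2 : ∀ h g a, ll (brH h g) a
        = brH h (ll g a) + brH (ll h a) g + ll h (rr g a) - ll g (rr h a)) :
    IsLieAlg (bbBracket brA brH rr ll 0 0) := by
  constructor
  · rintro ⟨a, h⟩ ⟨b, g⟩
    rw [zz_bb_apply, zz_bb_apply, Prod.neg_mk, Prod.mk.injEq]
    constructor
    · linear_combination (norm := abel) hAa a b
    · linear_combination (norm := abel) hHa h g
  · rintro ⟨a, h⟩ ⟨b, g⟩ ⟨c, f⟩
    simp only [zz_bb_apply]
    simp only [map_add, map_sub, LinearMap.add_apply, LinearMap.sub_apply]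
    rw [Prod.mk_add_mk, Prod.mk_add_mk, show ((0 : A × H)) = ((0 : A), (0 : H)) from rfl, Prod.mk.injEq]
    constructor
    all_goals dsimp only
    · linear_combination (norm := abel) hAj a b c + hM1 h g c + hM1 g f a + hM1 f h b
        - hBB1 f a b - hBB1 h b c - hBB1 g c a
        - hAa a (rr f b) - hAa b (rr h c) - hAa c (rr g a)
    · linear_combination (norm := abel) hHj h g f - hM2 f a b - hM2 h b c - hM2 g c a
        + hBB2 h g c + hBB2 g f a + hBB2 f h b
        + hHa h (ll g c) + hHa g (ll f a) + hHa f (ll h b)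
lemma zz_sum6 {G : Type*} [AddCommGroup G] {p q r s t u : G}
    (h1 : p + q + r = 0) (h2 : s + t + u = 0) : (p + s) + (q + t) + (r + u) = 0 := by
  rw [show (p + s) + (q + t) + (r + u) = (p + q + r) + (s + t + u) by abel, h1, h2, add_zero]

lemma zz_XN {L D : Type*} [AddCommGroup L] [Module k L] [AddCommGroup D] [Module k D]
    (f g h' : L →ₗ[k] D) (t : (L ⊗[k] L) ⊗[k] L) :
    ξmap k D (map (map f g) h' t) = map (map g h') f (ξmap k L t) := by
  induction t with
  | zero => simp
  | tmul s y =>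
    induction s with
    | zero => simp [TensorProduct.zero_tmul]
    | tmul x z => simp
    | add u v hu hv =>
      simp only [map_tmul] at hu hv
      simp [TensorProduct.add_tmul, hu, hv]
  | add u v hu hv => simp [hu, hv]

lemma zz_CJa (a' : A → Unit) (t : A ⊗[k] A) :
    map (bbCobracket δA δH 0 0 0 0) LinearMap.id
        (map (LinearMap.inl k A H) (LinearMap.inl k A H) t)
      = map (map (LinearMap.inl k A H) (LinearMap.inl k A H)) (LinearMap.inl k A H)
          (map δA LinearMap.id t) := by
  induction t with
  | zero => simp
  | tmul x y => simp [zz_cb_apply]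
  | add u v hu hv => simp [hu, hv]

lemma zz_CJb (t : H ⊗[k] H) :
    map (bbCobracket δA δH 0 0 0 0) LinearMap.id
        (map (LinearMap.inr k A H) (LinearMap.inr k A H) t)
      = map (map (LinearMap.inr k A H) (LinearMap.inr k A H)) (LinearMap.inr k A H)
          (map δH LinearMap.id t) := by
  induction t with
  | zero => simp
  | tmul x y => simp [zz_cb_apply]
  | add u v hu hv => simp [hu, hv]

lemma zz_double_coalg
    (hcA : ∀ x, TensorProduct.comm k A A (δA x) = - δA x)
    (hcH : ∀ x, TensorProduct.comm k H H (δH x) = - δH x)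
    (hjA : ∀ x, map δA LinearMap.id (δA x)
      + ξmap k A (map δA LinearMap.id (δA x))
      + ξmap k A (ξmap k A (map δA LinearMap.id (δA x))) = 0)
    (hjH : ∀ x, map δH LinearMap.id (δH x)
      + ξmap k H (map δH LinearMap.id (δH x))
      + ξmap k H (ξmap k H (map δH LinearMap.id (δH x))) = 0) :
    IsLieCoalg (bbCobracket δA δH 0 0 0 0) := by
  constructor
  · rintro ⟨a, h⟩
    rw [zz_cb_apply, map_add, zz_comm_map, zz_comm_map, hcA a, hcH h, map_neg, map_neg]
    abel
  · rintro ⟨a, h⟩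
    rw [zz_cb_apply]
    simp only [map_add]
    rw [zz_CJa δA δH (fun _ => ()), zz_CJb δA δH]
    rw [zz_XN, zz_XN, zz_XN, zz_XN]
    have ea : map (map (LinearMap.inl k A H) (LinearMap.inl k A H)) (LinearMap.inl k A H)
          (map δA LinearMap.id (δA a))
        + map (map (LinearMap.inl k A H) (LinearMap.inl k A H)) (LinearMap.inl k A H)
          (ξmap k A (map δA LinearMap.id (δA a)))
        + map (map (LinearMap.inl k A H) (LinearMap.inl k A H)) (LinearMap.inl k A H)
          (ξmap k A (ξmap k A (map δA LinearMap.id (δA a)))) = 0 := by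
      rw [← map_add, ← map_add, hjA a, map_zero]
    have eh : map (map (LinearMap.inr k A H) (LinearMap.inr k A H)) (LinearMap.inr k A H)
          (map δH LinearMap.id (δH h))
        + map (map (LinearMap.inr k A H) (LinearMap.inr k A H)) (LinearMap.inr k A H)
          (ξmap k H (map δH LinearMap.id (δH h)))
        + map (map (LinearMap.inr k A H) (LinearMap.inr k A H)) (LinearMap.inr k A H)
          (ξmap k H (ξmap k H (map δH LinearMap.id (δH h)))) = 0 := by
      rw [← map_add, ← map_add, hjH h, map_zero]
    exact zz_sum6 (G := ((A × H) ⊗[k] (A × H)) ⊗[k] (A × H)) ea eh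

lemma zz_brD_inl (a p : A) (h : H) :
    bbBracket brA brH rr ll 0 0 (a, h) (LinearMap.inl k A H p)
      = LinearMap.inl k A H (brA a p) + LinearMap.inl k A H (rr h p)
        + LinearMap.inr k A H (ll h p) := by
  simp [zz_bb_apply, Prod.ext_iff]

lemma zz_brD_inr (a : A) (h q : H) :
    bbBracket brA brH rr ll 0 0 (a, h) (LinearMap.inr k A H q)
      = - LinearMap.inl k A H (rr q a) + LinearMap.inr k A H (brH h q)
        - LinearMap.inr k A H (ll q a) := by
  simp [zz_bb_apply, Prod.ext_iff]

lemma zz_brDf_inl (b p : A) (g : H) :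
    (bbBracket brA brH rr ll 0 0).flip (b, g) (LinearMap.inl k A H p)
      = LinearMap.inl k A H (brA.flip b p) - LinearMap.inl k A H (rr g p)
        - LinearMap.inr k A H (ll g p) := by
  simp [zz_bb_apply, Prod.ext_iff]

lemma zz_brDf_inr (b : A) (g q : H) :
    (bbBracket brA brH rr ll 0 0).flip (b, g) (LinearMap.inr k A H q)
      = LinearMap.inl k A H (rr.flip b q) + LinearMap.inr k A H (brH.flip g q)
        + LinearMap.inr k A H (ll.flip b q) := by
  simp [zz_bb_apply, Prod.ext_iff]

lemma zz_RL1 (a : A) (h : H) (t : A ⊗[k] A) :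
    map (bbBracket brA brH rr ll 0 0 (a, h)) LinearMap.id
        (map (LinearMap.inl k A H) (LinearMap.inl k A H) t)
      = map (LinearMap.inl k A H) (LinearMap.inl k A H) (map (brA a) LinearMap.id t)
        + map (LinearMap.inl k A H) (LinearMap.inl k A H) (map (rr h) LinearMap.id t)
        + map (LinearMap.inr k A H) (LinearMap.inl k A H) (map (ll h) LinearMap.id t) := by
  induction t with
  | zero => simp
  | tmul p q => simp only [map_tmul, LinearMap.id_apply, zz_brD_inl, TensorProduct.add_tmul]
  | add u v hu hv => simp [hu, hv]; abel

lemma zz_RL2 (a : A) (h : H) (s : H ⊗[k] H) :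
    map (bbBracket brA brH rr ll 0 0 (a, h)) LinearMap.id
        (map (LinearMap.inr k A H) (LinearMap.inr k A H) s)
      = - map (LinearMap.inl k A H) (LinearMap.inr k A H) (map (rr.flip a) LinearMap.id s)
        + map (LinearMap.inr k A H) (LinearMap.inr k A H) (map (brH h) LinearMap.id s)
        - map (LinearMap.inr k A H) (LinearMap.inr k A H) (map (ll.flip a) LinearMap.id s) := by
  induction s with
  | zero => simp
  | tmul p q => simp only [map_tmul, LinearMap.id_apply, LinearMap.flip_apply, zz_brD_inr,
      TensorProduct.add_tmul, TensorProduct.sub_tmul, TensorProduct.neg_tmul]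
  | add u v hu hv => simp [hu, hv]; abel

lemma zz_RL3 (a : A) (h : H) (t : A ⊗[k] A) :
    map LinearMap.id (bbBracket brA brH rr ll 0 0 (a, h))
        (map (LinearMap.inl k A H) (LinearMap.inl k A H) t)
      = map (LinearMap.inl k A H) (LinearMap.inl k A H) (map LinearMap.id (brA a) t)
        + map (LinearMap.inl k A H) (LinearMap.inl k A H) (map LinearMap.id (rr h) t)
        + map (LinearMap.inl k A H) (LinearMap.inr k A H) (map LinearMap.id (ll h) t) := by
  induction t with
  | zero => simp
  | tmul p q => simp only [map_tmul, LinearMap.id_apply, zz_brD_inl, TensorProduct.tmul_add]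
  | add u v hu hv => simp [hu, hv]; abel

lemma zz_RL4 (a : A) (h : H) (s : H ⊗[k] H) :
    map LinearMap.id (bbBracket brA brH rr ll 0 0 (a, h))
        (map (LinearMap.inr k A H) (LinearMap.inr k A H) s)
      = - map (LinearMap.inr k A H) (LinearMap.inl k A H) (map LinearMap.id (rr.flip a) s)
        + map (LinearMap.inr k A H) (LinearMap.inr k A H) (map LinearMap.id (brH h) s)
        - map (LinearMap.inr k A H) (LinearMap.inr k A H) (map LinearMap.id (ll.flip a) s) := by
  induction s with
  | zero => simp
  | tmul p q => simp only [map_tmul, LinearMap.id_apply, LinearMap.flip_apply, zz_brD_inr,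
      TensorProduct.tmul_add, TensorProduct.tmul_sub, TensorProduct.tmul_neg]
  | add u v hu hv => simp [hu, hv]; abel

lemma zz_RL5 (b : A) (g : H) (t : A ⊗[k] A) :
    map LinearMap.id ((bbBracket brA brH rr ll 0 0).flip (b, g))
        (map (LinearMap.inl k A H) (LinearMap.inl k A H) t)
      = map (LinearMap.inl k A H) (LinearMap.inl k A H) (map LinearMap.id (brA.flip b) t)
        - map (LinearMap.inl k A H) (LinearMap.inl k A H) (map LinearMap.id (rr g) t)
        - map (LinearMap.inl k A H) (LinearMap.inr k A H) (map LinearMap.id (ll g) t) := by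
  induction t with
  | zero => simp
  | tmul p q => simp only [map_tmul, LinearMap.id_apply, zz_brDf_inl,
      TensorProduct.tmul_add, TensorProduct.tmul_sub]
  | add u v hu hv => simp [hu, hv]; abel

lemma zz_RL6 (b : A) (g : H) (s : H ⊗[k] H) :
    map LinearMap.id ((bbBracket brA brH rr ll 0 0).flip (b, g))
        (map (LinearMap.inr k A H) (LinearMap.inr k A H) s)
      = map (LinearMap.inr k A H) (LinearMap.inl k A H) (map LinearMap.id (rr.flip b) s)
        + map (LinearMap.inr k A H) (LinearMap.inr k A H) (map LinearMap.id (brH.flip g) s)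
        + map (LinearMap.inr k A H) (LinearMap.inr k A H) (map LinearMap.id (ll.flip b) s) := by
  induction s with
  | zero => simp
  | tmul p q => simp only [map_tmul, LinearMap.id_apply, zz_brDf_inr,
      TensorProduct.tmul_add]
  | add u v hu hv => simp [hu, hv]; abel

lemma zz_RL7 (b : A) (g : H) (t : A ⊗[k] A) :
    map ((bbBracket brA brH rr ll 0 0).flip (b, g)) LinearMap.id
        (map (LinearMap.inl k A H) (LinearMap.inl k A H) t)
      = map (LinearMap.inl k A H) (LinearMap.inl k A H) (map (brA.flip b) LinearMap.id t)
        - map (LinearMap.inl k A H) (LinearMap.inl k A H) (map (rr g) LinearMap.id t)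
        - map (LinearMap.inr k A H) (LinearMap.inl k A H) (map (ll g) LinearMap.id t) := by
  induction t with
  | zero => simp
  | tmul p q => simp only [map_tmul, LinearMap.id_apply, zz_brDf_inl,
      TensorProduct.add_tmul, TensorProduct.sub_tmul]
  | add u v hu hv => simp [hu, hv]; abel

lemma zz_RL8 (b : A) (g : H) (s : H ⊗[k] H) :
    map ((bbBracket brA brH rr ll 0 0).flip (b, g)) LinearMap.id
        (map (LinearMap.inr k A H) (LinearMap.inr k A H) s)
      = map (LinearMap.inl k A H) (LinearMap.inr k A H) (map (rr.flip b) LinearMap.id s)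
        + map (LinearMap.inr k A H) (LinearMap.inr k A H) (map (brH.flip g) LinearMap.id s)
        + map (LinearMap.inr k A H) (LinearMap.inr k A H) (map (ll.flip b) LinearMap.id s) := by
  induction s with
  | zero => simp
  | tmul p q => simp only [map_tmul, LinearMap.id_apply, zz_brDf_inr,
      TensorProduct.add_tmul]
  | add u v hu hv => simp [hu, hv]; abel

lemma zz_double_LB
    (hLBA : ∀ a b, δA (brA a b)
        = map (brA a) LinearMap.id (δA b) + map LinearMap.id (brA a) (δA b)
          + map LinearMap.id (brA.flip b) (δA a) + map (brA.flip b) LinearMap.id (δA a))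
    (hLBH : ∀ h g, δH (brH h g)
        = map (brH h) LinearMap.id (δH g) + map LinearMap.id (brH h) (δH g)
          + map LinearMap.id (brH.flip g) (δH h) + map (brH.flip g) LinearMap.id (δH h))
    (hMCA : ∀ h a, δA (rr h a)
        = map (rr h) LinearMap.id (δA a) + map LinearMap.id (rr h) (δA a))
    (hMCH : ∀ h a, δH (ll h a)
        = map (ll.flip a) LinearMap.id (δH h) + map LinearMap.id (ll.flip a) (δH h))
    (hAA1 : ∀ h a, map LinearMap.id (rr.flip a) (δH h)
        + map (ll h) LinearMap.id (δA a) = 0)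
    (hAA1' : ∀ h a, map (rr.flip a) LinearMap.id (δH h)
        + map LinearMap.id (ll h) (δA a) = 0)
    (x y : A × H) :
    bbCobracket δA δH 0 0 0 0 (bbBracket brA brH rr ll 0 0 x y)
      = map (bbBracket brA brH rr ll 0 0 x) LinearMap.id (bbCobracket δA δH 0 0 0 0 y)
        + map LinearMap.id (bbBracket brA brH rr ll 0 0 x) (bbCobracket δA δH 0 0 0 0 y)
        + map LinearMap.id ((bbBracket brA brH rr ll 0 0).flip y) (bbCobracket δA δH 0 0 0 0 x)
        + map ((bbBracket brA brH rr ll 0 0).flip y) LinearMap.id (bbCobracket δA δH 0 0 0 0 x) := by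
  obtain ⟨a, h⟩ := x
  obtain ⟨b, g⟩ := y
  rw [zz_bb_apply]
  simp only [zz_cb_apply]
  simp only [map_add, map_sub]
  rw [hLBA a b, hMCA h b, hMCA g a, hLBH h g, hMCH h b, hMCH g a]
  simp only [map_add]
  rw [zz_RL1, zz_RL2, zz_RL3, zz_RL4, zz_RL5, zz_RL6, zz_RL7, zz_RL8]
  have eA1 : map LinearMap.id (rr.flip b) (δH h)
      = - map (ll h) LinearMap.id (δA b) := add_eq_zero_iff_eq_neg.mp (hAA1 h b)
  have eA2 : map LinearMap.id (rr.flip a) (δH g)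
      = - map (ll g) LinearMap.id (δA a) := add_eq_zero_iff_eq_neg.mp (hAA1 g a)
  have eB1 : map (rr.flip b) LinearMap.id (δH h)
      = - map LinearMap.id (ll h) (δA b) := add_eq_zero_iff_eq_neg.mp (hAA1' h b)
  have eB2 : map (rr.flip a) LinearMap.id (δH g)
      = - map LinearMap.id (ll g) (δA a) := add_eq_zero_iff_eq_neg.mp (hAA1' g a)
  rw [eA1, eA2, eB1, eB2]
  simp only [map_neg]
  abel

end double

/-- For a skew-pairing `ω` between Lie bialgebras, the actions
`h ▷ a := ω(h, a₂) a₁` and `h ◁ a := ω(h₂, a) h₁` form a matched pair of Lie algebras,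
(AA1) holds, `A` is a left `H`-module Lie coalgebra, `H` is a right `A`-module Lie
coalgebra, and consequently `A ⋈_ω H` is a Lie bialgebra. -/
theorem skew_pairing_double_cross_sum [CharZero k]
    (brA : A →ₗ[k] A →ₗ[k] A) (δA : A →ₗ[k] A ⊗[k] A)
    (brH : H →ₗ[k] H →ₗ[k] H) (δH : H →ₗ[k] H ⊗[k] H)
    (ω : H →ₗ[k] A →ₗ[k] k)
    (hA : IsLieBialg brA δA) (hH : IsLieBialg brH δH)
    -- `ω` is a skew-pairing:  `ω([h,g], a) = ω(h, a₁) ω(g, a₂)`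
    (hω1 : ∀ h g a, ω (brH h g) a
        = LinearMap.mul' k k (TensorProduct.map (ω h) (ω g) (δA a)))
    -- and `ω(h, [a,b]) = ω(h₁, b) ω(h₂, a)`
    (hω2 : ∀ h a b, ω h (brA a b)
        = LinearMap.mul' k k (TensorProduct.map (ω.flip b) (ω.flip a) (δH h))) :
    let r := pairingRact δA ω
    let l := pairingLact δH ω
    -- `A` is a left `H`-module
    (∀ h g a, r (brH h g) a = r h (r g a) - r g (r h a)) ∧
    -- `H` is a right `A`-module
    (∀ h a b, l h (brA a b) = l (l h a) b - l (l h b) a) ∧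
    -- (BB1)
    (∀ h a b, r h (brA a b)
        = brA (r h a) b + brA a (r h b) + r (l h a) b - r (l h b) a) ∧
    -- (BB2)
    (∀ h g a, l (brH h g) a
        = brH h (l g a) + brH (l h a) g + l h (r g a) - l g (r h a)) ∧
    -- (AA1) : `h₁ ⊗ (h₂ ▷ a) + (h ◁ a₁) ⊗ a₂ = 0` in `H ⊗ A`
    (∀ h a, TensorProduct.map LinearMap.id (r.flip a) (δH h)
        + TensorProduct.map (l h) LinearMap.id (δA a) = 0) ∧
    -- `A` is a left `H`-module Lie coalgebra
    (∀ h a, δA (r h a)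
        = TensorProduct.map (r h) LinearMap.id (δA a)
        + TensorProduct.map LinearMap.id (r h) (δA a)) ∧
    -- `H` is a right `A`-module Lie coalgebra
    (∀ h a, δH (l h a)
        = TensorProduct.map (l.flip a) LinearMap.id (δH h)
        + TensorProduct.map LinearMap.id (l.flip a) (δH h)) ∧
    -- `A ⋈_ω H` is a Lie bialgebra
    IsLieBialg (bbBracket brA brH r l 0 0) (bbCobracket δA δH 0 0 0 0) := by
  obtain ⟨⟨hAa, hAj⟩, ⟨hcA, hjA⟩, hLBA⟩ := hA
  obtain ⟨⟨hHa, hHj⟩, ⟨hcH, hjH⟩, hLBH⟩ := hH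
  intro r l
  have hM1 : ∀ h g a, pairingRact δA ω (brH h g) a
      = pairingRact δA ω h (pairingRact δA ω g a)
        - pairingRact δA ω g (pairingRact δA ω h a) :=
    fun h g a => zz_M1 _ _ _ hω1 hcA hjA h g a
  have hM2 : ∀ h a b, pairingLact δH ω h (brA a b)
      = pairingLact δH ω (pairingLact δH ω h a) b
        - pairingLact δH ω (pairingLact δH ω h b) a :=
    fun h a b => zz_M2 _ _ _ hω2 hcH hjH h a b
  have hBB1 : ∀ h a b, pairingRact δA ω h (brA a b)
      = brA (pairingRact δA ω h a) b + brA a (pairingRact δA ω h b)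
        + pairingRact δA ω (pairingLact δH ω h a) b
        - pairingRact δA ω (pairingLact δH ω h b) a :=
    fun h a b => zz_BB1 _ _ _ _ hω2 hcH hLBA h a b
  have hBB2 : ∀ h g a, pairingLact δH ω (brH h g) a
      = brH h (pairingLact δH ω g a) + brH (pairingLact δH ω h a) g
        + pairingLact δH ω h (pairingRact δA ω g a)
        - pairingLact δH ω g (pairingRact δA ω h a) :=
    fun h g a => zz_BB2 _ _ _ _ hω1 hcA hLBH h g a
  have hAA1 : ∀ h a, map LinearMap.id ((pairingRact δA ω).flip a) (δH h)
      + map (pairingLact δH ω h) LinearMap.id (δA a) = 0 :=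
    fun h a => zz_AA1 _ _ _ hcA h a
  have hAA1' : ∀ h a, map ((pairingRact δA ω).flip a) LinearMap.id (δH h)
      + map LinearMap.id (pairingLact δH ω h) (δA a) = 0 :=
    fun h a => zz_AA1' _ _ _ hcA hcH h a
  have hMCA : ∀ h a, δA (pairingRact δA ω h a)
      = map (pairingRact δA ω h) LinearMap.id (δA a)
        + map LinearMap.id (pairingRact δA ω h) (δA a) :=
    fun h a => zz_MCA _ _ hcA hjA h a
  have hMCH : ∀ h a, δH (pairingLact δH ω h a)
      = map ((pairingLact δH ω).flip a) LinearMap.id (δH h)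
        + map LinearMap.id ((pairingLact δH ω).flip a) (δH h) :=
    fun h a => zz_MCH _ _ hcH hjH h a
  refine ⟨hM1, hM2, hBB1, hBB2, hAA1, hMCA, hMCH, ?_, ?_, ?_⟩
  · exact zz_double_alg brA brH (pairingRact δA ω) (pairingLact δH ω)
      hAa hAj hHa hHj hM1 hM2 hBB1 hBB2
  · exact zz_double_coalg δA δH hcA hcH hjA hjH
  · exact fun x y => zz_double_LB brA brH (pairingRact δA ω) (pairingLact δH ω) δA δH
      hLBA hLBH hMCA hMCH hAA1 hAA1' x y

end
end

section
/- Let (A, H, φ, ψ) be a matched pair of Lie coalgebras. Then the vector space A ⊕ H equipped with the cobracket δ_D defined by δ_D(a) = δ_A(a) + φ(a) − τφ(a) for a ∈ A and δ_D(h) = δ_H(h) + ψ(h) − τψ(h) for h ∈ H (all terms viewed inside (A ⊕ H) ⊗ (A ⊕ H)) is a Lie coalgebra, i.e. δ_D satisfies coanticommutativity τ∘δ_D = −δ_D and the co-Jacobi identity (id + ξ + ξ²)∘(δ_D ⊗ id)∘δ_D = 0. -/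
open TensorProduct

noncomputable section

variable {k : Type*} [Field k]
variable {A H : Type*} [AddCommGroup A] [Module k A] [AddCommGroup H] [Module k H]

/-- heterogeneous cyclic rotation -/
def c3 (k U V W : Type*) [Field k] [AddCommGroup U] [Module k U] [AddCommGroup V] [Module k V]
    [AddCommGroup W] [Module k W] :
    ((U ⊗[k] V) ⊗[k] W) →ₗ[k] ((V ⊗[k] W) ⊗[k] U) :=
  (TensorProduct.comm k U (V ⊗[k] W)).toLinearMap ∘ₗ (TensorProduct.assoc k U V W).toLinearMap

variable {U V W M N P Q : Type*} [AddCommGroup U] [Module k U] [AddCommGroup V] [Module k V]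
  [AddCommGroup W] [Module k W] [AddCommGroup M] [Module k M] [AddCommGroup N] [Module k N]
  [AddCommGroup P] [Module k P] [AddCommGroup Q] [Module k Q]

@[simp] lemma c3_tmul (u : U) (v : V) (w : W) :
    c3 k U V W ((u ⊗ₜ v) ⊗ₜ w) = (v ⊗ₜ w) ⊗ₜ u := by
  simp [c3]

lemma mapmap (f : P →ₗ[k] U) (g : Q →ₗ[k] V) (f' : M →ₗ[k] P) (g' : N →ₗ[k] Q) (t : M ⊗[k] N) :
    TensorProduct.map f g (TensorProduct.map f' g' t)
      = TensorProduct.map (f ∘ₗ f') (g ∘ₗ g') t := by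
  rw [TensorProduct.map_comp]; rfl

lemma mzl (g : N →ₗ[k] Q) : TensorProduct.map (0 : M →ₗ[k] P) g = 0 := by
  apply TensorProduct.ext'; intro m n; simp

lemma mzr (f : M →ₗ[k] P) : TensorProduct.map f (0 : N →ₗ[k] Q) = 0 := by
  apply TensorProduct.ext'; intro m n; simp

lemma mnl (f : M →ₗ[k] P) (g : N →ₗ[k] Q) :
    TensorProduct.map (-f) g = - TensorProduct.map f g := by
  apply TensorProduct.ext'; intro m n; simp [neg_tmul]

lemma comm_map (f : M →ₗ[k] P) (g : N →ₗ[k] Q) (t : M ⊗[k] N) :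
    TensorProduct.comm k P Q (TensorProduct.map f g t)
      = TensorProduct.map g f (TensorProduct.comm k M N t) := by
  induction t using TensorProduct.induction_on with
  | zero => simp
  | tmul m n => simp
  | add x y hx hy => simp [hx, hy]

lemma comm_comm (t : M ⊗[k] N) :
    TensorProduct.comm k N M (TensorProduct.comm k M N t) = t := by
  induction t using TensorProduct.induction_on with
  | zero => simp
  | tmul m n => simp
  | add x y hx hy => simp [hx, hy]

lemma c3_cyc (t : (U ⊗[k] V) ⊗[k] W) :
    c3 k W U V (c3 k V W U (c3 k U V W t)) = t := by
  induction t using TensorProduct.induction_on with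
  | zero => simp
  | add x y hx hy => simp [hx, hy]
  | tmul m w =>
    induction m using TensorProduct.induction_on with
    | zero => simp
    | add x y hx hy => simp only [add_tmul, map_add, hx, hy]
    | tmul u v => simp

lemma xi_proj {L X Y Z : Type*} [AddCommGroup L] [Module k L] [AddCommGroup X] [Module k X]
    [AddCommGroup Y] [Module k Y] [AddCommGroup Z] [Module k Z]
    (f : L →ₗ[k] X) (g : L →ₗ[k] Y) (e : L →ₗ[k] Z) (t : (L ⊗[k] L) ⊗[k] L) :
    TensorProduct.map (TensorProduct.map f g) e (ξmap k L t)
      = c3 k Z X Y (TensorProduct.map (TensorProduct.map e f) g t) := by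
  induction t using TensorProduct.induction_on with
  | zero => simp
  | add x y hx hy => simp [hx, hy]
  | tmul m z =>
    induction m using TensorProduct.induction_on with
    | zero => simp [ξmap]
    | add x y hx hy => simp only [add_tmul, map_add, hx, hy]
    | tmul x y => simp [ξmap]

lemma ximap_eq (L : Type*) [AddCommGroup L] [Module k L] : ξmap k L = c3 k L L L := rfl

lemma brB (φ : A →ₗ[k] H ⊗[k] A) (u : M ⊗[k] A) :
    c3 k A H M (TensorProduct.map ((TensorProduct.comm k H A).toLinearMap ∘ₗ φ) LinearMap.id
        (TensorProduct.comm k M A u))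
      = TensorProduct.map (TensorProduct.comm k M H).toLinearMap LinearMap.id
          ((TensorProduct.assoc k M H A).symm (TensorProduct.map LinearMap.id φ u)) := by
  induction u using TensorProduct.induction_on with
  | zero => simp
  | add x y hx hy => simp only [map_add, hx, hy]
  | tmul m b =>
    simp only [comm_tmul, map_tmul, LinearMap.comp_apply, LinearMap.id_apply, LinearEquiv.coe_coe]
    generalize φ b = v
    induction v using TensorProduct.induction_on with
    | zero => simp
    | add x y hx hy => simp only [map_add, tmul_add, add_tmul, hx, hy]
    | tmul g c => simp

lemma brSwap (ψ : H →ₗ[k] H ⊗[k] A) (u : H ⊗[k] N) :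
    c3 k A H N (TensorProduct.map ((TensorProduct.comm k H A).toLinearMap ∘ₗ ψ) LinearMap.id u)
      = swapR k H A N (TensorProduct.map ψ LinearMap.id u) := by
  induction u using TensorProduct.induction_on with
  | zero => simp
  | add x y hx hy => simp only [map_add, hx, hy]
  | tmul g n =>
    simp only [map_tmul, LinearMap.comp_apply, LinearMap.id_apply, LinearEquiv.coe_coe]
    generalize ψ g = v
    induction v using TensorProduct.induction_on with
    | zero => simp [swapR]
    | add x y hx hy => simp only [map_add, tmul_add, add_tmul, hx, hy]
    | tmul g' c => simp [swapR]

lemma brC (χ : Q →ₗ[k] M ⊗[k] P) (u : N ⊗[k] Q) :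
    c3 k P N M (c3 k M P N (TensorProduct.map χ LinearMap.id (TensorProduct.comm k N Q u)))
      = (TensorProduct.assoc k N M P).symm (TensorProduct.map LinearMap.id χ u) := by
  induction u using TensorProduct.induction_on with
  | zero => simp
  | add x y hx hy => simp only [map_add, hx, hy]
  | tmul n q =>
    simp only [comm_tmul, map_tmul, LinearMap.id_apply, LinearEquiv.coe_coe]
    generalize χ q = v
    induction v using TensorProduct.induction_on with
    | zero => simp
    | add x y hx hy => simp only [map_add, tmul_add, add_tmul, hx, hy]
    | tmul m p => simp
section
variable (δA : A →ₗ[k] A ⊗[k] A) (δH : H →ₗ[k] H ⊗[k] H)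
  (φ : A →ₗ[k] H ⊗[k] A) (ψ : H →ₗ[k] H ⊗[k] A)

local notation "D" => bbCobracket δA δH φ ψ (0 : A →ₗ[k] H ⊗[k] H) (0 : H →ₗ[k] A ⊗[k] A)
local notation "ι" => LinearMap.inl k A H
local notation "κ" => LinearMap.inr k A H

lemma dD_apply (a : A) (h : H) :
    D (a, h)
      = TensorProduct.map ι ι (δA a)
        + TensorProduct.map κ ι (φ a)
        - TensorProduct.map ι κ (TensorProduct.comm k H A (φ a))
        + (TensorProduct.map κ κ (δH h)
          + TensorProduct.map κ ι (ψ h)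
          - TensorProduct.map ι κ (TensorProduct.comm k H A (ψ h))) := by
  simp [bbCobracket]

local notation "pA" => LinearMap.fst k A H
local notation "pH" => LinearMap.snd k A H

lemma cl1 : TensorProduct.map pA pA ∘ₗ (D ∘ₗ ι) = δA := by
  ext a
  simp [dD_apply, mapmap, mzl, mzr, LinearMap.fst_comp_inl, LinearMap.snd_comp_inl,
    LinearMap.fst_comp_inr, LinearMap.snd_comp_inr, TensorProduct.map_id]

lemma cl2 : TensorProduct.map pH pA ∘ₗ (D ∘ₗ ι) = φ := by
  ext a
  simp [dD_apply, mapmap, mzl, mzr, LinearMap.fst_comp_inl, LinearMap.snd_comp_inl,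
    LinearMap.fst_comp_inr, LinearMap.snd_comp_inr, TensorProduct.map_id]

lemma cl3 : TensorProduct.map pA pH ∘ₗ (D ∘ₗ ι)
    = -((TensorProduct.comm k H A).toLinearMap ∘ₗ φ) := by
  ext a
  simp [dD_apply, mapmap, mzl, mzr, LinearMap.fst_comp_inl, LinearMap.snd_comp_inl,
    LinearMap.fst_comp_inr, LinearMap.snd_comp_inr, TensorProduct.map_id]

lemma cl4 : TensorProduct.map pH pH ∘ₗ (D ∘ₗ ι) = 0 := by
  ext a
  simp [dD_apply, mapmap, mzl, mzr, LinearMap.fst_comp_inl, LinearMap.snd_comp_inl,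
    LinearMap.fst_comp_inr, LinearMap.snd_comp_inr, TensorProduct.map_id]

lemma cl5 : TensorProduct.map pA pA ∘ₗ (D ∘ₗ κ) = 0 := by
  ext h
  simp [dD_apply, mapmap, mzl, mzr, LinearMap.fst_comp_inl, LinearMap.snd_comp_inl,
    LinearMap.fst_comp_inr, LinearMap.snd_comp_inr, TensorProduct.map_id]

lemma cl6 : TensorProduct.map pH pA ∘ₗ (D ∘ₗ κ) = ψ := by
  ext h
  simp [dD_apply, mapmap, mzl, mzr, LinearMap.fst_comp_inl, LinearMap.snd_comp_inl,
    LinearMap.fst_comp_inr, LinearMap.snd_comp_inr, TensorProduct.map_id]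

lemma cl7 : TensorProduct.map pA pH ∘ₗ (D ∘ₗ κ)
    = -((TensorProduct.comm k H A).toLinearMap ∘ₗ ψ) := by
  ext h
  simp [dD_apply, mapmap, mzl, mzr, LinearMap.fst_comp_inl, LinearMap.snd_comp_inl,
    LinearMap.fst_comp_inr, LinearMap.snd_comp_inr, TensorProduct.map_id]

lemma cl8 : TensorProduct.map pH pH ∘ₗ (D ∘ₗ κ) = δH := by
  ext h
  simp [dD_apply, mapmap, mzl, mzr, LinearMap.fst_comp_inl, LinearMap.snd_comp_inl,
    LinearMap.fst_comp_inr, LinearMap.snd_comp_inr, TensorProduct.map_id]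

lemma projAAA (a : A) (h : H) :
    TensorProduct.map (TensorProduct.map pA pA) pA
        (TensorProduct.map D LinearMap.id (D (a, h)))
      = TensorProduct.map δA LinearMap.id (δA a) := by
  conv_lhs => rw [dD_apply]
  simp only [map_add, map_sub, mapmap, LinearMap.id_comp, LinearMap.comp_id]
  simp only [cl1, cl2, cl3, cl4, cl5, cl6, cl7, cl8, LinearMap.fst_comp_inl,
    LinearMap.snd_comp_inl, LinearMap.fst_comp_inr, LinearMap.snd_comp_inr, mzl, mzr, mnl,
    LinearMap.zero_apply, LinearMap.neg_apply, TensorProduct.map_id, LinearMap.id_apply]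
  abel


lemma projHAA (a : A) (h : H) :
    TensorProduct.map (TensorProduct.map pH pA) pA
        (TensorProduct.map D LinearMap.id (D (a, h)))
      = TensorProduct.map φ LinearMap.id (δA a) + TensorProduct.map ψ LinearMap.id (φ a) + TensorProduct.map ψ LinearMap.id (ψ h) := by
  conv_lhs => rw [dD_apply]
  simp only [map_add, map_sub, mapmap, LinearMap.id_comp, LinearMap.comp_id]
  simp only [cl1, cl2, cl3, cl4, cl5, cl6, cl7, cl8, LinearMap.fst_comp_inl,
    LinearMap.snd_comp_inl, LinearMap.fst_comp_inr, LinearMap.snd_comp_inr, mzl, mzr, mnl,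
    LinearMap.zero_apply, LinearMap.neg_apply, TensorProduct.map_id, LinearMap.id_apply]
  abel


lemma projAHA (a : A) (h : H) :
    TensorProduct.map (TensorProduct.map pA pH) pA
        (TensorProduct.map D LinearMap.id (D (a, h)))
      = -(TensorProduct.map ((TensorProduct.comm k H A).toLinearMap ∘ₗ φ) LinearMap.id (δA a)) - TensorProduct.map ((TensorProduct.comm k H A).toLinearMap ∘ₗ ψ) LinearMap.id (φ a) - TensorProduct.map ((TensorProduct.comm k H A).toLinearMap ∘ₗ ψ) LinearMap.id (ψ h) := by
  conv_lhs => rw [dD_apply]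
  simp only [map_add, map_sub, mapmap, LinearMap.id_comp, LinearMap.comp_id]
  simp only [cl1, cl2, cl3, cl4, cl5, cl6, cl7, cl8, LinearMap.fst_comp_inl,
    LinearMap.snd_comp_inl, LinearMap.fst_comp_inr, LinearMap.snd_comp_inr, mzl, mzr, mnl,
    LinearMap.zero_apply, LinearMap.neg_apply, TensorProduct.map_id, LinearMap.id_apply]
  abel


lemma projHHA (a : A) (h : H) :
    TensorProduct.map (TensorProduct.map pH pH) pA
        (TensorProduct.map D LinearMap.id (D (a, h)))
      = TensorProduct.map δH LinearMap.id (φ a) + TensorProduct.map δH LinearMap.id (ψ h) := by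
  conv_lhs => rw [dD_apply]
  simp only [map_add, map_sub, mapmap, LinearMap.id_comp, LinearMap.comp_id]
  simp only [cl1, cl2, cl3, cl4, cl5, cl6, cl7, cl8, LinearMap.fst_comp_inl,
    LinearMap.snd_comp_inl, LinearMap.fst_comp_inr, LinearMap.snd_comp_inr, mzl, mzr, mnl,
    LinearMap.zero_apply, LinearMap.neg_apply, TensorProduct.map_id, LinearMap.id_apply]
  abel


lemma projAAH (a : A) (h : H) :
    TensorProduct.map (TensorProduct.map pA pA) pH
        (TensorProduct.map D LinearMap.id (D (a, h)))
      = -(TensorProduct.map δA LinearMap.id (TensorProduct.comm k H A (φ a))) - TensorProduct.map δA LinearMap.id (TensorProduct.comm k H A (ψ h)) := by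
  conv_lhs => rw [dD_apply]
  simp only [map_add, map_sub, mapmap, LinearMap.id_comp, LinearMap.comp_id]
  simp only [cl1, cl2, cl3, cl4, cl5, cl6, cl7, cl8, LinearMap.fst_comp_inl,
    LinearMap.snd_comp_inl, LinearMap.fst_comp_inr, LinearMap.snd_comp_inr, mzl, mzr, mnl,
    LinearMap.zero_apply, LinearMap.neg_apply, TensorProduct.map_id, LinearMap.id_apply]
  abel


lemma projHAH (a : A) (h : H) :
    TensorProduct.map (TensorProduct.map pH pA) pH
        (TensorProduct.map D LinearMap.id (D (a, h)))
      = -(TensorProduct.map φ LinearMap.id (TensorProduct.comm k H A (φ a))) + TensorProduct.map ψ LinearMap.id (δH h) - TensorProduct.map φ LinearMap.id (TensorProduct.comm k H A (ψ h)) := by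
  conv_lhs => rw [dD_apply]
  simp only [map_add, map_sub, mapmap, LinearMap.id_comp, LinearMap.comp_id]
  simp only [cl1, cl2, cl3, cl4, cl5, cl6, cl7, cl8, LinearMap.fst_comp_inl,
    LinearMap.snd_comp_inl, LinearMap.fst_comp_inr, LinearMap.snd_comp_inr, mzl, mzr, mnl,
    LinearMap.zero_apply, LinearMap.neg_apply, TensorProduct.map_id, LinearMap.id_apply]
  abel


lemma projAHH (a : A) (h : H) :
    TensorProduct.map (TensorProduct.map pA pH) pH
        (TensorProduct.map D LinearMap.id (D (a, h)))
      = TensorProduct.map ((TensorProduct.comm k H A).toLinearMap ∘ₗ φ) LinearMap.id (TensorProduct.comm k H A (φ a)) - TensorProduct.map ((TensorProduct.comm k H A).toLinearMap ∘ₗ ψ) LinearMap.id (δH h) + TensorProduct.map ((TensorProduct.comm k H A).toLinearMap ∘ₗ φ) LinearMap.id (TensorProduct.comm k H A (ψ h)) := by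
  conv_lhs => rw [dD_apply]
  simp only [map_add, map_sub, mapmap, LinearMap.id_comp, LinearMap.comp_id]
  simp only [cl1, cl2, cl3, cl4, cl5, cl6, cl7, cl8, LinearMap.fst_comp_inl,
    LinearMap.snd_comp_inl, LinearMap.fst_comp_inr, LinearMap.snd_comp_inr, mzl, mzr, mnl,
    LinearMap.zero_apply, LinearMap.neg_apply, TensorProduct.map_id, LinearMap.id_apply]
  abel


lemma projHHH (a : A) (h : H) :
    TensorProduct.map (TensorProduct.map pH pH) pH
        (TensorProduct.map D LinearMap.id (D (a, h)))
      = TensorProduct.map δH LinearMap.id (δH h) := by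
  conv_lhs => rw [dD_apply]
  simp only [map_add, map_sub, mapmap, LinearMap.id_comp, LinearMap.comp_id]
  simp only [cl1, cl2, cl3, cl4, cl5, cl6, cl7, cl8, LinearMap.fst_comp_inl,
    LinearMap.snd_comp_inl, LinearMap.fst_comp_inr, LinearMap.snd_comp_inr, mzl, mzr, mnl,
    LinearMap.zero_apply, LinearMap.neg_apply, TensorProduct.map_id, LinearMap.id_apply]
  abel

lemma zero_of_proj (t : ((A × H) ⊗[k] (A × H)) ⊗[k] (A × H))
    (h1 : TensorProduct.map (TensorProduct.map pA pA) pA t = 0)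
    (h2 : TensorProduct.map (TensorProduct.map pH pA) pA t = 0)
    (h3 : TensorProduct.map (TensorProduct.map pA pH) pA t = 0)
    (h4 : TensorProduct.map (TensorProduct.map pH pH) pA t = 0)
    (h5 : TensorProduct.map (TensorProduct.map pA pA) pH t = 0)
    (h6 : TensorProduct.map (TensorProduct.map pH pA) pH t = 0)
    (h7 : TensorProduct.map (TensorProduct.map pA pH) pH t = 0)
    (h8 : TensorProduct.map (TensorProduct.map pH pH) pH t = 0) : t = 0 := by
  have hid : ι ∘ₗ pA + κ ∘ₗ pH = LinearMap.id := by
    ext x <;> simp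
  calc t = TensorProduct.map (TensorProduct.map LinearMap.id LinearMap.id) LinearMap.id t := by
        simp [TensorProduct.map_id]
    _ = 0 := by
        rw [← hid]
        simp only [TensorProduct.map_add_left, TensorProduct.map_add_right,
          TensorProduct.map_comp, LinearMap.add_apply, LinearMap.comp_apply, h1, h2, h3, h4,
          h5, h6, h7, h8, map_zero, add_zero, zero_add]

lemma keyHAA
    (hcA1 : ∀ x, TensorProduct.comm k A A (δA x) = - δA x)
    (hcomodH : (∀ h, TensorProduct.map LinearMap.id δA (ψ h)
        = TensorProduct.assoc k H A A (TensorProduct.map ψ LinearMap.id (ψ h))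
        - TensorProduct.map LinearMap.id (TensorProduct.comm k A A).toLinearMap
            (TensorProduct.assoc k H A A (TensorProduct.map ψ LinearMap.id (ψ h)))))
    (hBB3 : (∀ a, (TensorProduct.assoc k H A A).symm (TensorProduct.map LinearMap.id δA (φ a))
        = TensorProduct.map φ LinearMap.id (δA a)
        + TensorProduct.map (TensorProduct.comm k A H).toLinearMap LinearMap.id
            ((TensorProduct.assoc k A H A).symm (TensorProduct.map LinearMap.id φ (δA a)))
        + TensorProduct.map ψ LinearMap.id (φ a)
        - swapR k H A A (TensorProduct.map ψ LinearMap.id (φ a))))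
    (a : A) (h : H) :
    (TensorProduct.map φ LinearMap.id (δA a) + TensorProduct.map ψ LinearMap.id (φ a)
        + TensorProduct.map ψ LinearMap.id (ψ h))
      + c3 k A H A
          (-(TensorProduct.map ((TensorProduct.comm k H A).toLinearMap ∘ₗ φ) LinearMap.id (δA a))
            - TensorProduct.map ((TensorProduct.comm k H A).toLinearMap ∘ₗ ψ) LinearMap.id (φ a)
            - TensorProduct.map ((TensorProduct.comm k H A).toLinearMap ∘ₗ ψ) LinearMap.id (ψ h))
      + c3 k A H A (c3 k A A H
          (-(TensorProduct.map δA LinearMap.id (TensorProduct.comm k H A (φ a)))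
            - TensorProduct.map δA LinearMap.id (TensorProduct.comm k H A (ψ h)))) = 0 := by
  have e1 : c3 k A H A (TensorProduct.map ((TensorProduct.comm k H A).toLinearMap ∘ₗ φ)
        LinearMap.id (δA a))
      = -(TensorProduct.map (TensorProduct.comm k A H).toLinearMap LinearMap.id
          ((TensorProduct.assoc k A H A).symm (TensorProduct.map LinearMap.id φ (δA a)))) := by
    have b := brB (M := A) φ (TensorProduct.comm k A A (δA a))
    rw [comm_comm] at b
    rw [hcA1] at b
    simp only [map_neg] at b
    exact b
  have e2 := brSwap (N := A) ψ (φ a)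
  have e3 := brSwap (N := A) ψ (ψ h)
  have e4 := brC (χ := δA) (u := φ a)
  have e5 := brC (χ := δA) (u := ψ h)
  have e6 : (TensorProduct.assoc k H A A).symm (TensorProduct.map LinearMap.id δA (ψ h))
      = TensorProduct.map ψ LinearMap.id (ψ h)
        - swapR k H A A (TensorProduct.map ψ LinearMap.id (ψ h)) := by
    rw [hcomodH h]
    simp [swapR, map_sub]
  simp only [map_sub, map_add, map_neg]
  rw [e1, e2, e3, e4, e5, hBB3 a, e6]
  abel

lemma keyHHA
    (hcH1 : ∀ x, TensorProduct.comm k H H (δH x) = - δH x)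
    (hcomodA : (∀ a, TensorProduct.map δH LinearMap.id (φ a)
        = (TensorProduct.assoc k H H A).symm (TensorProduct.map LinearMap.id φ (φ a))
        - TensorProduct.map (TensorProduct.comm k H H).toLinearMap LinearMap.id
            ((TensorProduct.assoc k H H A).symm (TensorProduct.map LinearMap.id φ (φ a)))))
    (hBB4 : (∀ h, TensorProduct.map δH LinearMap.id (ψ h)
        = (TensorProduct.assoc k H H A).symm (TensorProduct.map LinearMap.id ψ (δH h))
        + swapR k H A H (TensorProduct.map ψ LinearMap.id (δH h))
        + (TensorProduct.assoc k H H A).symm (TensorProduct.map LinearMap.id φ (ψ h))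
        - TensorProduct.map (TensorProduct.comm k H H).toLinearMap LinearMap.id
            ((TensorProduct.assoc k H H A).symm (TensorProduct.map LinearMap.id φ (ψ h)))))
    (a : A) (h : H) :
    (TensorProduct.map δH LinearMap.id (φ a) + TensorProduct.map δH LinearMap.id (ψ h))
      + c3 k A H H
          (TensorProduct.map ((TensorProduct.comm k H A).toLinearMap ∘ₗ φ) LinearMap.id
              (TensorProduct.comm k H A (φ a))
            - TensorProduct.map ((TensorProduct.comm k H A).toLinearMap ∘ₗ ψ) LinearMap.id (δH h)
            + TensorProduct.map ((TensorProduct.comm k H A).toLinearMap ∘ₗ φ) LinearMap.id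
                (TensorProduct.comm k H A (ψ h)))
      + c3 k A H H (c3 k H A H
          (-(TensorProduct.map φ LinearMap.id (TensorProduct.comm k H A (φ a)))
            + TensorProduct.map ψ LinearMap.id (δH h)
            - TensorProduct.map φ LinearMap.id (TensorProduct.comm k H A (ψ h)))) = 0 := by
  have f1 := brB (M := H) φ (φ a)
  have f3 := brB (M := H) φ (ψ h)
  have f2 := brSwap (N := H) ψ (δH h)
  have f4 := brC (χ := φ) (u := φ a)
  have f6 := brC (χ := φ) (u := ψ h)
  have f5 : c3 k A H H (c3 k H A H (TensorProduct.map ψ LinearMap.id (δH h)))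
      = -((TensorProduct.assoc k H H A).symm
          (TensorProduct.map LinearMap.id ψ (δH h))) := by
    have b := brC (χ := ψ) (u := TensorProduct.comm k H H (δH h))
    rw [comm_comm] at b
    rw [hcH1] at b
    simp only [map_neg] at b
    exact b
  simp only [map_sub, map_add, map_neg]
  rw [f1, f2, f3, f4, f5, f6, hcomodA a, hBB4 h]
  abel

end


/-- A matched pair of Lie coalgebras `(A, H, φ, ψ)` yields a Lie coalgebra
structure on `A ⊕ H` with `δ_D(a) = δ_A(a) + φ(a) − τφ(a)`, `δ_D(h) = δ_H(h) + ψ(h) − τψ(h)`. -/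
theorem matched_pair_coalgebra_double_cross_coproduct [CharZero k]
    (δA : A →ₗ[k] A ⊗[k] A) (δH : H →ₗ[k] H ⊗[k] H)
    (φ : A →ₗ[k] H ⊗[k] A) (ψ : H →ₗ[k] H ⊗[k] A)
    (hcA : IsLieCoalg δA) (hcH : IsLieCoalg δH)
    -- `A` is a left `H`-comodule
    (hcomodA : (∀ a, TensorProduct.map δH LinearMap.id (φ a)
        = (TensorProduct.assoc k H H A).symm (TensorProduct.map LinearMap.id φ (φ a))
        - TensorProduct.map (TensorProduct.comm k H H).toLinearMap LinearMap.id
            ((TensorProduct.assoc k H H A).symm (TensorProduct.map LinearMap.id φ (φ a)))))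
    -- `H` is a right `A`-comodule
    (hcomodH : (∀ h, TensorProduct.map LinearMap.id δA (ψ h)
        = TensorProduct.assoc k H A A (TensorProduct.map ψ LinearMap.id (ψ h))
        - TensorProduct.map LinearMap.id (TensorProduct.comm k A A).toLinearMap
            (TensorProduct.assoc k H A A (TensorProduct.map ψ LinearMap.id (ψ h)))))
    -- (BB3)
    (hBB3 : (∀ a, (TensorProduct.assoc k H A A).symm (TensorProduct.map LinearMap.id δA (φ a))
        = TensorProduct.map φ LinearMap.id (δA a)
        + TensorProduct.map (TensorProduct.comm k A H).toLinearMap LinearMap.id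
            ((TensorProduct.assoc k A H A).symm (TensorProduct.map LinearMap.id φ (δA a)))
        + TensorProduct.map ψ LinearMap.id (φ a)
        - swapR k H A A (TensorProduct.map ψ LinearMap.id (φ a))))
    -- (BB4)
    (hBB4 : (∀ h, TensorProduct.map δH LinearMap.id (ψ h)
        = (TensorProduct.assoc k H H A).symm (TensorProduct.map LinearMap.id ψ (δH h))
        + swapR k H A H (TensorProduct.map ψ LinearMap.id (δH h))
        + (TensorProduct.assoc k H H A).symm (TensorProduct.map LinearMap.id φ (ψ h))
        - TensorProduct.map (TensorProduct.comm k H H).toLinearMap LinearMap.id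
            ((TensorProduct.assoc k H H A).symm (TensorProduct.map LinearMap.id φ (ψ h))))) :
    IsLieCoalg (bbCobracket δA δH φ ψ 0 0) := by
  constructor
  · intro x
    obtain ⟨a, h⟩ := x
    rw [dD_apply δA δH φ ψ a h]
    simp only [map_add, map_sub, map_neg, comm_map, comm_comm, hcA.1, hcH.1]
    abel
  · intro x
    obtain ⟨a, h⟩ := x
    apply zero_of_proj
    case h1 =>
      simp only [map_add, xi_proj]
      rw [projAAA δA δH φ ψ a h, ← ximap_eq]
      exact hcA.2 a
    case h2 =>
      simp only [map_add, xi_proj]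
      rw [projHAA δA δH φ ψ a h, projAHA δA δH φ ψ a h, projAAH δA δH φ ψ a h]
      exact keyHAA δA φ ψ hcA.1 hcomodH hBB3 a h
    case h3 =>
      simp only [map_add, xi_proj]
      rw [projAHA δA δH φ ψ a h, projAAH δA δH φ ψ a h, projHAA δA δH φ ψ a h]
      have h0 := keyHAA δA φ ψ hcA.1 hcomodH hBB3 a h
      have hr := congrArg (⇑(c3 k H A A)) h0
      have hr2 := congrArg (⇑(c3 k A A H)) hr
      simp only [map_add, map_neg, map_sub, map_zero, c3_cyc] at hr2
      simp only [map_add, map_neg, map_sub]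
      rw [← hr2]
      abel
    case h4 =>
      simp only [map_add, xi_proj]
      rw [projHHA δA δH φ ψ a h, projAHH δA δH φ ψ a h, projHAH δA δH φ ψ a h]
      exact keyHHA δH φ ψ hcH.1 hcomodA hBB4 a h
    case h5 =>
      simp only [map_add, xi_proj]
      rw [projAAH δA δH φ ψ a h, projHAA δA δH φ ψ a h, projAHA δA δH φ ψ a h]
      have h0 := keyHAA δA φ ψ hcA.1 hcomodH hBB3 a h
      have hr := congrArg (⇑(c3 k H A A)) h0
      simp only [map_add, map_neg, map_sub, map_zero, c3_cyc] at hr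
      simp only [map_add, map_neg, map_sub]
      rw [← hr]
      abel
    case h6 =>
      simp only [map_add, xi_proj]
      rw [projHAH δA δH φ ψ a h, projHHA δA δH φ ψ a h, projAHH δA δH φ ψ a h]
      have h0 := keyHHA δH φ ψ hcH.1 hcomodA hBB4 a h
      have hr := congrArg (⇑(c3 k H H A)) h0
      simp only [map_add, map_neg, map_sub, map_zero, c3_cyc] at hr
      simp only [map_add, map_neg, map_sub]
      rw [← hr]
      abel
    case h7 =>
      simp only [map_add, xi_proj]
      rw [projAHH δA δH φ ψ a h, projHAH δA δH φ ψ a h, projHHA δA δH φ ψ a h]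
      have h0 := keyHHA δH φ ψ hcH.1 hcomodA hBB4 a h
      have hr := congrArg (⇑(c3 k H H A)) h0
      have hr2 := congrArg (⇑(c3 k H A H)) hr
      simp only [map_add, map_neg, map_sub, map_zero, c3_cyc] at hr2
      simp only [map_add, map_neg, map_sub]
      rw [← hr2]
      abel
    case h8 =>
      simp only [map_add, xi_proj]
      rw [projHHH δA δH φ ψ a h, ← ximap_eq]
      exact hcH.2 h

end
end
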